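/- arXiv:1911.04961 — 4 statements merged into one kernel-verified Lean document; each statement's English description precedes it below -/
import Mathlib

section
/- Let G be a 3-γc-critical graph with minimum vertex cut S and maximum independent set I, and write G − S as a disjoint union of two parts H₁ and H₂ (each a nonempty union of components). If |S \ I| ≥ 2 and α(G) ≥ κ(G) + 1, then |H₁| = 1 or |H₂| = 1. -/
open SimpleGraph Finset

variable {V : Type*}

/-- The graph `G` with the extra edge `uv` added. -/
def SimpleGraph.addEdge (G : SimpleGraph V) (u v : V) : SimpleGraph V :=
  G ⊔ SimpleGraph.fromEdgeSet {s(u, v)}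

/-- `D` is a connected dominating set of `G`. -/
def SimpleGraph.IsCDS (G : SimpleGraph V) (D : Set V) : Prop :=
  (∀ v : V, v ∈ D ∨ ∃ u ∈ D, G.Adj u v) ∧ (G.induce D).Connected

/-- The connected domination number. -/
noncomputable def SimpleGraph.cdn [Fintype V] (G : SimpleGraph V) : ℕ :=
  sInf {n | ∃ D : Finset V, D.card = n ∧ G.IsCDS ↑D}

/-- `G` is a `3`-`γ_c`-critical graph. -/
def SimpleGraph.IsCritical3 [Fintype V] (G : SimpleGraph V) : Prop :=
  G.Connected ∧ G.cdn = 3 ∧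
    ∀ u v : V, u ≠ v → ¬G.Adj u v → (G.addEdge u v).cdn < 3

/-- `s` is an independent set of `G`. -/
def SimpleGraph.IsIndepSet' (G : SimpleGraph V) (s : Set V) : Prop :=
  s.Pairwise (fun a b => ¬G.Adj a b)

/-- The independence number. -/
noncomputable def SimpleGraph.indepNum' [Fintype V] (G : SimpleGraph V) : ℕ :=
  sSup {n | ∃ s : Finset V, G.IsIndepSet' ↑s ∧ s.card = n}

/-- `S` is a vertex cut: removing it leaves a non-connected graph. -/
def SimpleGraph.IsVertexCut [Fintype V] (G : SimpleGraph V) (S : Finset V) : Prop :=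
  ¬(G.induce ((↑S : Set V)ᶜ)).Connected

/-- The vertex connectivity: minimum size of a vertex cut. -/
noncomputable def SimpleGraph.conn [Fintype V] (G : SimpleGraph V) : ℕ :=
  sInf {n | ∃ S : Finset V, S.card = n ∧ G.IsVertexCut S}

namespace ThreeGammaC

/-- Witness predicate: `{p, x}` is a CDS of `G + pq` missing only `q`. -/
def TW (G : SimpleGraph V) (p q x : V) : Prop :=
  G.Adj p x ∧ ¬G.Adj x q ∧ x ≠ p ∧ x ≠ q ∧
    ∀ z : V, z = p ∨ z = x ∨ z = q ∨ G.Adj p z ∨ G.Adj x z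

lemma addEdge_adj (G : SimpleGraph V) (u v a b : V) :
    (G.addEdge u v).Adj a b ↔ G.Adj a b ∨ (a ≠ b ∧ ((a = u ∧ b = v) ∨ (a = v ∧ b = u))) := by
  simp only [SimpleGraph.addEdge, SimpleGraph.sup_adj, SimpleGraph.fromEdgeSet_adj,
    Set.mem_singleton_iff, Sym2.eq_iff]
  tauto

/-- A single vertex induces a connected graph. -/
lemma connected_induce_single (G : SimpleGraph V) (a : V) : (G.induce {a}).Connected := by
  rw [SimpleGraph.connected_iff]
  refine ⟨?_, ⟨⟨a, rfl⟩⟩⟩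
  rintro ⟨x, hx⟩ ⟨y, hy⟩
  simp only [Set.mem_singleton_iff] at hx hy
  subst hx; subst hy
  exact SimpleGraph.Reachable.refl _

/-- Two adjacent vertices induce a connected graph. -/
lemma connected_induce_pair (G : SimpleGraph V) {a b : V} (hab : G.Adj a b) :
    (G.induce {a, b}).Connected := by
  rw [SimpleGraph.connected_iff]
  have hadj : (G.induce {a, b}).Adj ⟨a, by simp⟩ ⟨b, by simp⟩ := by
    simp [SimpleGraph.induce, hab]
  refine ⟨?_, ⟨⟨a, by simp⟩⟩⟩
  rintro ⟨x, hx⟩ ⟨y, hy⟩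
  simp only [Set.mem_insert_iff, Set.mem_singleton_iff] at hx hy
  rcases hx with rfl | rfl <;> rcases hy with rfl | rfl
  · exact SimpleGraph.Reachable.refl _
  · exact hadj.reachable
  · exact hadj.symm.reachable
  · exact SimpleGraph.Reachable.refl _

/-- If the two-vertex induced graph is connected then the vertices are adjacent. -/
lemma adj_of_connected_induce_pair (G : SimpleGraph V) {a b : V} (hne : a ≠ b)
    (h : (G.induce {a, b}).Connected) : G.Adj a b := by
  have hr := h.preconnected ⟨a, by simp⟩ ⟨b, by simp⟩
  obtain ⟨w⟩ := hr
  cases w with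
  | nil => exact absurd rfl hne
  | cons h' p =>
    rename_i c
    have hadj : G.Adj a c.1 := h'
    have hc : c.1 = a ∨ c.1 = b := c.2
    rcases hc with hc | hc
    · rw [hc] at hadj; exact absurd hadj (G.irrefl)
    · rwa [hc] at hadj

variable [Fintype V] [DecidableEq V]

lemma no_small_cds (G : SimpleGraph V) (h3 : G.cdn = 3) (D : Finset V) (hD : G.IsCDS ↑D) :
    3 ≤ D.card := by
  have := Nat.sInf_le (s := {n | ∃ D : Finset V, D.card = n ∧ G.IsCDS ↑D}) ⟨D, rfl, hD⟩
  rwa [← SimpleGraph.cdn, h3] at this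

lemma pair_cds (G : SimpleGraph V) {a b : V} (hab : G.Adj a b)
    (hdom : ∀ z : V, z = a ∨ z = b ∨ G.Adj a z ∨ G.Adj b z) :
    G.IsCDS ↑({a, b} : Finset V) := by
  constructor
  · intro z
    rcases hdom z with rfl | rfl | h | h
    · left; simp
    · left; simp
    · right; exact ⟨a, by simp, h⟩
    · right; exact ⟨b, by simp, h⟩
  · have : (↑({a, b} : Finset V) : Set V) = ({a, b} : Set V) := by simp
    rw [this]
    exact connected_induce_pair G hab

lemma univ_cds (G : SimpleGraph V) (hc : G.Connected) : G.IsCDS ↑(Finset.univ : Finset V) := by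
  constructor
  · intro z; left; simp
  · have : (↑(Finset.univ : Finset V) : Set V) = Set.univ := by simp
    rw [this]
    exact (SimpleGraph.induceUnivIso G).connected_iff.mpr hc

lemma exists_cds_card_le_two (G' : SimpleGraph V) (hc : G'.Connected) (h : G'.cdn < 3) :
    ∃ D : Finset V, D.card ≤ 2 ∧ G'.IsCDS ↑D := by
  have hne : {n | ∃ D : Finset V, D.card = n ∧ G'.IsCDS ↑D}.Nonempty :=
    ⟨_, Finset.univ, rfl, univ_cds G' hc⟩
  have hmem := Nat.sInf_mem hne
  obtain ⟨D, hcard, hcds⟩ := hmem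
  exact ⟨D, by rw [hcard]; exact Nat.lt_succ_iff.mp h, hcds⟩

lemma exists_neighbor (G : SimpleGraph V) (hc : G.Connected) {v w : V} (hne : w ≠ v) :
    ∃ y, G.Adj v y := by
  obtain ⟨p⟩ := hc.preconnected v w
  cases p with
  | nil => exact absurd rfl hne.symm
  | cons h _ => exact ⟨_, h⟩

lemma trichotomy (G : SimpleGraph V) (hconn : G.Connected) (h3 : G.cdn = 3)
    (hcrit : ∀ u v : V, u ≠ v → ¬G.Adj u v → (G.addEdge u v).cdn < 3)
    {u v : V} (huv : u ≠ v) (hnadj : ¬G.Adj u v) :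
    (∀ z : V, z = u ∨ z = v ∨ G.Adj u z ∨ G.Adj v z) ∨
      (∃ x, TW G u v x) ∨ (∃ x, TW G v u x) := by
  set G' := G.addEdge u v with hG'
  have hc' : G'.Connected := hconn.mono le_sup_left
  obtain ⟨D, hD2, hDdom, hDconn⟩ := exists_cds_card_le_two G' hc' (hcrit u v huv hnadj)
  have hadj' : ∀ a b : V, G'.Adj a b ↔ G.Adj a b ∨ (a ≠ b ∧ ((a = u ∧ b = v) ∨ (a = v ∧ b = u))) :=
    fun a b => addEdge_adj G u v a b
  have hpure : ∀ a b : V, ¬(a = u ∧ b = v) → ¬(a = v ∧ b = u) → G'.Adj a b → G.Adj a b := by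
    intro a b h1 h2 h
    rcases (hadj' a b).mp h with h | ⟨_, h' | h'⟩
    · exact h
    · exact absurd h' h1
    · exact absurd h' h2
  have hcc : D.card = 0 ∨ D.card = 1 ∨ D.card = 2 := by omega
  rcases hcc with hcc | hcc | hcc
  · -- empty: impossible
    exfalso
    have hDe : D = ∅ := Finset.card_eq_zero.mp hcc
    rcases hDdom u with hu | ⟨y, hy, _⟩
    · simp [hDe] at hu
    · simp [hDe] at hy
  · -- singleton
    exfalso
    obtain ⟨w, hw⟩ := Finset.card_eq_one.mp hcc
    have hdomw : ∀ z : V, z ≠ w → G'.Adj w z := by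
      intro z hz
      rcases hDdom z with h | ⟨y, hy, h⟩
      · exact absurd (by simpa [hw] using h) hz
      · have : y = w := by simpa [hw] using hy
        rwa [this] at h
    by_cases hwu : w = u
    · subst hwu
      -- w = u : u is adjacent in G to everything except v
      have hdomu : ∀ z : V, z ≠ w → z ≠ v → G.Adj w z := by
        intro z hzu hzv
        exact hpure w z (fun h => hzv h.2) (fun h => huv h.1) (hdomw z hzu)
      obtain ⟨y, hy⟩ := exists_neighbor G hconn (v := v) (w := w) huv
      have hyu : y ≠ w := by rintro rfl; exact hnadj hy.symm
      have hyv : y ≠ v := fun h => G.irrefl (h ▸ hy)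
      have hwy : G.Adj w y := hdomu y hyu hyv
      have hcds : G.IsCDS ↑({w, y} : Finset V) := by
        apply pair_cds G hwy
        intro z
        by_cases hzu : z = w
        · left; exact hzu
        by_cases hzv : z = v
        · subst hzv; right; right; right; exact hy.symm
        · right; right; left; exact hdomu z hzu hzv
      have := no_small_cds G h3 _ hcds
      have hle := Finset.card_insert_le w ({y} : Finset V)
      simp at hle
      omega
    · by_cases hwv : w = v
      · subst hwv
        have hdomv : ∀ z : V, z ≠ w → z ≠ u → G.Adj w z := by
          intro z hzv hzu
          exact hpure w z (fun h => huv h.1.symm) (fun h => hzu h.2) (hdomw z hzv)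
        obtain ⟨y, hy⟩ := exists_neighbor G hconn (v := u) (w := w) (Ne.symm huv)
        have hyu : y ≠ u := fun h => G.irrefl (h ▸ hy)
        have hyv : y ≠ w := by rintro rfl; exact hnadj hy
        have hwy : G.Adj w y := hdomv y hyv hyu
        have hcds : G.IsCDS ↑({w, y} : Finset V) := by
          apply pair_cds G hwy
          intro z
          by_cases hzv : z = w
          · left; exact hzv
          by_cases hzu : z = u
          · subst hzu; right; right; right; exact hy.symm
          · right; right; left; exact hdomv z hzv hzu
        have := no_small_cds G h3 _ hcds
        have hle := Finset.card_insert_le w ({y} : Finset V)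
        simp at hle
        omega
      · -- w ∉ {u, v} : {w} is a CDS of G
        have hcds : G.IsCDS ↑({w} : Finset V) := by
          constructor
          · intro z
            by_cases hz : z = w
            · left; simp [hz]
            · right
              refine ⟨w, by simp, ?_⟩
              exact hpure w z (fun h => hwu h.1) (fun h => hwv h.1) (hdomw z hz)
          · have : (↑({w} : Finset V) : Set V) = {w} := by simp
            rw [this]; exact connected_induce_single G w
        have := no_small_cds G h3 _ hcds
        simp at this
  · -- card two
    obtain ⟨w1, w2, hw12, hDw⟩ := Finset.card_eq_two.mp hcc
    have hDconn' : G'.Adj w1 w2 := by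
      apply adj_of_connected_induce_pair G' hw12
      have : (↑D : Set V) = {w1, w2} := by rw [hDw]; simp
      rwa [this] at hDconn
    have hmemD : ∀ z : V, z ∈ D ↔ z = w1 ∨ z = w2 := by
      intro z; rw [hDw]; simp
    have hdom2 : ∀ z : V, z = w1 ∨ z = w2 ∨ G'.Adj w1 z ∨ G'.Adj w2 z := by
      intro z
      rcases hDdom z with h | ⟨y, hy, h⟩
      · rcases (hmemD z).mp (by simpa using h) with h | h
        · exact Or.inl h
        · exact Or.inr (Or.inl h)
      · rcases (hmemD y).mp (by simpa using hy) with rfl | rfl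
        · exact Or.inr (Or.inr (Or.inl h))
        · exact Or.inr (Or.inr (Or.inr h))
    by_cases hu : u ∈ D <;> by_cases hv : v ∈ D
    · -- D = {u, v} : type T0
      left
      have hsub : ({u, v} : Finset V) ⊆ D := by
        intro z hz
        rcases Finset.mem_insert.mp hz with rfl | hz
        · exact hu
        · exact (Finset.mem_singleton.mp hz) ▸ hv
      have hDuv : ({u, v} : Finset V) = D := by
        apply Finset.eq_of_subset_of_card_le hsub
        rw [hcc, Finset.card_insert_of_notMem (by simp [huv]), Finset.card_singleton]
      intro z
      by_cases hzu : z = u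
      · exact Or.inl hzu
      by_cases hzv : z = v
      · exact Or.inr (Or.inl hzv)
      rcases hDdom z with h | ⟨y, hy, h⟩
      · have : z ∈ D := by simpa using h
        rw [← hDuv] at this
        rcases Finset.mem_insert.mp this with h | h
        · exact absurd h hzu
        · exact absurd (Finset.mem_singleton.mp h) hzv
      · have hyD : y ∈ D := by simpa using hy
        rw [← hDuv] at hyD
        rcases Finset.mem_insert.mp hyD with rfl | hy'
        · refine Or.inr (Or.inr (Or.inl ?_))
          exact hpure y z (fun h' => hzv h'.2) (fun h' => huv h'.1) h
        · have : y = v := Finset.mem_singleton.mp hy'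
          subst this
          refine Or.inr (Or.inr (Or.inr ?_))
          exact hpure y z (fun h' => huv h'.1.symm) (fun h' => hzu h'.2) h
    · -- u ∈ D, v ∉ D : type TW u v x
      right; left
      have huw : u = w1 ∨ u = w2 := (hmemD u).mp hu
      -- let x be the other element
      obtain ⟨x, hDux, hxu⟩ : ∃ x, D = {u, x} ∧ x ≠ u := by
        rcases huw with rfl | rfl
        · exact ⟨w2, hDw, hw12.symm⟩
        · refine ⟨w1, by rw [hDw, Finset.pair_comm], hw12⟩
      have hxv : x ≠ v := by rintro rfl; exact hv (by simp [hDux])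
      have hxD : x ∈ D := by simp [hDux]
      have hadjux' : G'.Adj u x := by
        rcases huw with rfl | rfl
        · have : x = w2 := by
            have := hxD
            rw [hmemD] at this
            rcases this with h | h
            · exact absurd h hxu
            · exact h
          rw [this]; exact hDconn'
        · have : x = w1 := by
            have := hxD
            rw [hmemD] at this
            rcases this with h | h
            · exact h
            · exact absurd h hxu
          rw [this]; exact hDconn'.symm
      have hadjux : G.Adj u x := hpure u x (fun h => hxv h.2) (fun h => huv h.1) hadjux'
      have hcov : ∀ z : V, z = u ∨ z = x ∨ z = v ∨ G.Adj u z ∨ G.Adj x z := by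
        intro z
        by_cases hzu : z = u
        · exact Or.inl hzu
        by_cases hzx : z = x
        · exact Or.inr (Or.inl hzx)
        by_cases hzv : z = v
        · exact Or.inr (Or.inr (Or.inl hzv))
        rcases hDdom z with h | ⟨y, hy, h⟩
        · have : z ∈ D := by simpa using h
          rw [hDux] at this
          rcases Finset.mem_insert.mp this with h | h
          · exact absurd h hzu
          · exact absurd (Finset.mem_singleton.mp h) hzx
        · have hyD : y ∈ D := by simpa using hy
          rw [hDux] at hyD
          rcases Finset.mem_insert.mp hyD with rfl | hy'
          · refine Or.inr (Or.inr (Or.inr (Or.inl ?_)))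
            exact hpure y z (fun h' => hzv h'.2) (fun h' => huv h'.1) h
          · have : y = x := Finset.mem_singleton.mp hy'
            subst this
            refine Or.inr (Or.inr (Or.inr (Or.inr ?_)))
            exact hpure y z (fun h' => hzv h'.2) (fun h' => hxv h'.1) h
      have hnxv : ¬G.Adj x v := by
        intro hxvadj
        have hcds : G.IsCDS ↑({u, x} : Finset V) := by
          apply pair_cds G hadjux
          intro z
          rcases hcov z with h | h | h | h | h
          · exact Or.inl h
          · exact Or.inr (Or.inl h)
          · subst h; exact Or.inr (Or.inr (Or.inr hxvadj))
          · exact Or.inr (Or.inr (Or.inl h))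
          · exact Or.inr (Or.inr (Or.inr h))
        have := no_small_cds G h3 _ hcds
        have hle := Finset.card_insert_le u ({x} : Finset V)
        simp at hle
        omega
      exact ⟨x, hadjux, hnxv, fun h => hxu h, hxv, hcov⟩
    · -- v ∈ D, u ∉ D : type TW v u x
      right; right
      have hvw : v = w1 ∨ v = w2 := (hmemD v).mp hv
      obtain ⟨x, hDvx, hxv⟩ : ∃ x, D = {v, x} ∧ x ≠ v := by
        rcases hvw with rfl | rfl
        · exact ⟨w2, hDw, hw12.symm⟩
        · refine ⟨w1, by rw [hDw, Finset.pair_comm], hw12⟩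
      have hxu : x ≠ u := by rintro rfl; exact hu (by simp [hDvx])
      have hxD : x ∈ D := by simp [hDvx]
      have hadjvx' : G'.Adj v x := by
        rcases hvw with rfl | rfl
        · have : x = w2 := by
            have := hxD
            rw [hmemD] at this
            rcases this with h | h
            · exact absurd h hxv
            · exact h
          rw [this]; exact hDconn'
        · have : x = w1 := by
            have := hxD
            rw [hmemD] at this
            rcases this with h | h
            · exact h
            · exact absurd h hxv
          rw [this]; exact hDconn'.symm
      have hadjvx : G.Adj v x := hpure v x (fun h => huv h.1.symm) (fun h => hxu h.2) hadjvx'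
      have hcov : ∀ z : V, z = v ∨ z = x ∨ z = u ∨ G.Adj v z ∨ G.Adj x z := by
        intro z
        by_cases hzv : z = v
        · exact Or.inl hzv
        by_cases hzx : z = x
        · exact Or.inr (Or.inl hzx)
        by_cases hzu : z = u
        · exact Or.inr (Or.inr (Or.inl hzu))
        rcases hDdom z with h | ⟨y, hy, h⟩
        · have : z ∈ D := by simpa using h
          rw [hDvx] at this
          rcases Finset.mem_insert.mp this with h | h
          · exact absurd h hzv
          · exact absurd (Finset.mem_singleton.mp h) hzx
        · have hyD : y ∈ D := by simpa using hy
          rw [hDvx] at hyD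
          rcases Finset.mem_insert.mp hyD with rfl | hy'
          · refine Or.inr (Or.inr (Or.inr (Or.inl ?_)))
            exact hpure y z (fun h' => huv h'.1.symm) (fun h' => hzu h'.2) h
          · have : y = x := Finset.mem_singleton.mp hy'
            subst this
            refine Or.inr (Or.inr (Or.inr (Or.inr ?_)))
            exact hpure y z (fun h' => hzv h'.2) (fun h' => hxv h'.1) h
      have hnxu : ¬G.Adj x u := by
        intro hxuadj
        have hcds : G.IsCDS ↑({v, x} : Finset V) := by
          apply pair_cds G hadjvx
          intro z
          rcases hcov z with h | h | h | h | h
          · exact Or.inl h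
          · exact Or.inr (Or.inl h)
          · subst h; exact Or.inr (Or.inr (Or.inr hxuadj))
          · exact Or.inr (Or.inr (Or.inl h))
          · exact Or.inr (Or.inr (Or.inr h))
        have := no_small_cds G h3 _ hcds
        have hle := Finset.card_insert_le v ({x} : Finset V)
        simp at hle
        omega
      exact ⟨x, hadjvx, hnxu, fun h => hxv h, hxu, hcov⟩
    · -- neither: D is a 2-CDS of G, contradiction
      exfalso
      have hw1u : w1 ≠ u := by rintro rfl; exact hu (by simp [hDw])
      have hw1v : w1 ≠ v := by rintro rfl; exact hv (by simp [hDw])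
      have hw2u : w2 ≠ u := by rintro rfl; exact hu (by simp [hDw])
      have hw2v : w2 ≠ v := by rintro rfl; exact hv (by simp [hDw])
      have hadj12 : G.Adj w1 w2 :=
        hpure w1 w2 (fun h => hw1u h.1) (fun h => hw1v h.1) hDconn'
      have hcds : G.IsCDS ↑({w1, w2} : Finset V) := by
        apply pair_cds G hadj12
        intro z
        rcases hdom2 z with h | h | h | h
        · exact Or.inl h
        · exact Or.inr (Or.inl h)
        · exact Or.inr (Or.inr (Or.inl
            (hpure w1 z (fun h' => hw1u h'.1) (fun h' => hw1v h'.1) h)))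
        · exact Or.inr (Or.inr (Or.inr
            (hpure w2 z (fun h' => hw2u h'.1) (fun h' => hw2v h'.1) h)))
      have := no_small_cds G h3 _ hcds
      have hle := Finset.card_insert_le w1 ({w2} : Finset V)
      simp at hle
      omega

lemma not_connected_induce_compl (G : SimpleGraph V) {T : Finset V} {a e : V}
    (ha : a ∉ T) (he : e ∉ T) (hne : a ≠ e) (hN : ∀ z, G.Adj a z → z ∈ T) :
    ¬(G.induce ((↑T : Set V)ᶜ)).Connected := by
  intro hc
  have hma : a ∈ ((↑T : Set V)ᶜ) := by simp [ha]
  have hme : e ∈ ((↑T : Set V)ᶜ) := by simp [he]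
  obtain ⟨w⟩ := hc.preconnected ⟨a, hma⟩ ⟨e, hme⟩
  cases w with
  | nil => exact hne rfl
  | cons h' p =>
    rename_i c
    have hadj : G.Adj a c.1 := h'
    have := hN c.1 hadj
    have hc2 := c.2
    simp only [Set.mem_compl_iff, Finset.mem_coe] at hc2
    exact hc2 this

lemma conn_le_of_cut (G : SimpleGraph V) (T : Finset V) (hT : G.IsVertexCut T) :
    G.conn ≤ T.card :=
  Nat.sInf_le ⟨T, rfl, hT⟩

lemma branch (G : SimpleGraph V) (S I P Q : Finset V) (estar : V) (xf : V → V)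
    (hind : ∀ a ∈ I, ∀ b ∈ I, a ≠ b → ¬G.Adj a b)
    (htri : ∀ u v : V, u ≠ v → ¬G.Adj u v →
      (∀ z : V, z = u ∨ z = v ∨ G.Adj u z ∨ G.Adj v z) ∨ (∃ x, TW G u v x) ∨ (∃ x, TW G v u x))
    (hno2 : ∀ D : Finset V, G.IsCDS ↑D → 3 ≤ D.card)
    (hconnS : S.card = G.conn)
    (hpart : ∀ z : V, z ∉ S ↔ z ∈ P ∨ z ∈ Q)
    (hdisj : ∀ z : V, z ∈ P → z ∈ Q → False)
    (hsep : ∀ a ∈ P, ∀ b ∈ Q, ¬G.Adj a b)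
    (hP2 : 2 ≤ P.card) (hQ2 : 2 ≤ Q.card)
    (heI : estar ∈ I) (heQ : estar ∈ Q)
    (hJ2 : 2 ≤ ((I \ S).erase estar).card)
    (hxf : ∀ f, f ∈ I → f ∉ S → f ≠ estar →
      xf f ∈ S ∧ xf f ∉ I ∧ G.Adj estar (xf f) ∧ ¬G.Adj (xf f) f ∧
        (∀ i ∈ I, i ≠ f → G.Adj (xf f) i) ∧
        ∀ z : V, z = estar ∨ z = xf f ∨ z = f ∨ G.Adj estar z ∨ G.Adj (xf f) z)
    (hdec : ∀ x, x ∈ S → x ∉ I → ∃ f, f ∈ I ∧ f ∉ S ∧ f ≠ estar ∧ x = xf f) :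
    False := by
  classical
  have heS : estar ∉ S := (hpart estar).mpr (Or.inr heQ)
  have heP : estar ∉ P := fun h => hdisj estar h heQ
  have hPnS : ∀ z ∈ P, z ∉ S := fun z hz => (hpart z).mpr (Or.inl hz)
  have hQnS : ∀ z ∈ Q, z ∉ S := fun z hz => (hpart z).mpr (Or.inr hz)
  have hmem : ∀ z : V, z ∈ S ∨ z ∈ P ∨ z ∈ Q := by
    intro z
    by_cases h : z ∈ S
    · exact Or.inl h
    · exact Or.inr ((hpart z).mp h)
  have hSallI : ∀ x ∈ S, (∀ i ∈ I, G.Adj x i) → False := by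
    intro x hxS hall
    have hxI : x ∉ I :=
      fun hxI => hind x hxI estar heI (fun he => heS (he ▸ hxS)) (hall estar heI)
    obtain ⟨f, hfI, hfS, hfe, rfl⟩ := hdec x hxS hxI
    exact (hxf f hfI hfS hfe).2.2.2.1 (hall f hfI)
  have hSnoe : ∀ x ∈ S, x ∉ I → G.Adj estar x := by
    intro x hxS hxI
    obtain ⟨f, hfI, hfS, hfe, rfl⟩ := hdec x hxS hxI
    exact (hxf f hfI hfS hfe).2.2.1
  by_cases hPI : ∀ p ∈ P, p ∈ I
  · -- P is entirely independent: small cut around any a ∈ P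
    obtain ⟨a, haP⟩ : P.Nonempty := Finset.card_pos.mp (by omega)
    have haI : a ∈ I := hPI a haP
    have haS : a ∉ S := hPnS a haP
    have hae : a ≠ estar := fun h => hdisj a haP (h ▸ heQ)
    obtain ⟨hxS, hxI, hxe, hxna, hxall, hxcov⟩ := hxf a haI haS hae
    set T := (S.filter (fun z => z ∉ I)).erase (xf a) with hT
    have hTsubS : T ⊆ S := fun z hz => (Finset.mem_filter.mp (Finset.mem_of_mem_erase hz)).1
    have hNsub : ∀ z, G.Adj a z → z ∈ T := by
      intro z hz
      have hzne : a ≠ z := fun h => G.irrefl (h ▸ hz)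
      have hzQ : z ∉ Q := fun hzQ => hsep a haP z hzQ hz
      have hzP : z ∉ P := fun hzP => hind a haI z (hPI z hzP) hzne hz
      have hzS : z ∈ S := by
        rcases hmem z with h | h | h
        · exact h
        · exact absurd h hzP
        · exact absurd h hzQ
      have hzI : z ∉ I := fun hzI => hind a haI z hzI hzne hz
      have hzxa : z ≠ xf a := by
        rintro rfl
        exact hxna hz.symm
      exact Finset.mem_erase.mpr ⟨hzxa, Finset.mem_filter.mpr ⟨hzS, hzI⟩⟩
    have hxaT : xf a ∈ S.filter (fun z => z ∉ I) := Finset.mem_filter.mpr ⟨hxS, hxI⟩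
    have hTcard : T.card < S.card := by
      have h1 : T.card = (S.filter (fun z => z ∉ I)).card - 1 := Finset.card_erase_of_mem hxaT
      have h2 : (S.filter (fun z => z ∉ I)).card ≤ S.card := Finset.card_filter_le _ _
      have h3 : 0 < (S.filter (fun z => z ∉ I)).card := Finset.card_pos.mpr ⟨_, hxaT⟩
      omega
    have haT : a ∉ T := fun h => haS (hTsubS h)
    have heT : estar ∉ T := fun h => heS (hTsubS h)
    have hcut : G.IsVertexCut T := not_connected_induce_compl G haT heT hae hNsub
    have := conn_le_of_cut G T hcut
    omega
  · push_neg at hPI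
    obtain ⟨v, hvP, hvI⟩ := hPI
    have hv_e : estar ≠ v := fun h => hdisj v hvP (h ▸ heQ)
    have hnadj_ev : ¬G.Adj estar v := fun h => hsep v hvP estar heQ h.symm
    -- generic refutation of the type where {estar, x} covers everything but v
    have hTWev : ∀ x, TW G estar v x → False := by
      rintro x ⟨hax, hnxv, hxne, hxnv, hcov⟩
      have hxP : x ∉ P := fun hxP => hsep x hxP estar heQ hax.symm
      obtain ⟨p, hpP, hpv⟩ : ∃ p ∈ P, p ≠ v := by
        obtain ⟨p1, hp1, p2, hp2, hne⟩ := Finset.one_lt_card.mp (by omega : 1 < P.card)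
        by_cases h : p1 = v
        · exact ⟨p2, hp2, fun h2 => hne (h2 ▸ h ▸ rfl)⟩
        · exact ⟨p1, hp1, h⟩
      have hxQ : x ∉ Q := by
        intro hxQ
        rcases hcov p with h | h | h | h | h
        · exact heP (h ▸ hpP)
        · exact hdisj p hpP (h ▸ hxQ)
        · exact hpv h
        · exact hsep p hpP estar heQ h.symm
        · exact hsep p hpP x hxQ h.symm
      have hxS : x ∈ S := by
        rcases hmem x with h | h | h
        · exact h
        · exact absurd h hxP
        · exact absurd h hxQ
      have hxI : x ∉ I := fun hxI => hind estar heI x hxI (Ne.symm hxne) hax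
      apply hSallI x hxS
      intro i hiI
      by_cases hie : i = estar
      · exact hie ▸ hax.symm
      rcases hcov i with h | h | h | h | h
      · exact absurd h hie
      · exact absurd (h ▸ hiI) hxI
      · exact absurd (h ▸ hiI) hvI
      · exact absurd h (hind estar heI i hiI (Ne.symm hie))
      · exact h
    have hAB : (∀ a ∈ I, a ∈ P → G.Adj v a) ∧ (∀ b ∈ I, b ∈ Q → b = estar) := by
      rcases htri estar v hv_e hnadj_ev with hcov | ⟨x, htw⟩ | ⟨x, htw⟩
      · constructor
        · intro a haI haP
          rcases hcov a with h | h | h | h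
          · exact absurd (h ▸ haP) heP
          · exact absurd (h ▸ haI) hvI
          · exact absurd h (hind estar heI a haI (fun h2 => heP (h2 ▸ haP)))
          · exact h
        · intro b hbI hbQ
          by_contra hne
          rcases hcov b with h | h | h | h
          · exact hne h
          · exact hdisj v hvP (h ▸ hbQ)
          · exact hind estar heI b hbI (fun h2 => hne h2.symm) h
          · exact hsep v hvP b hbQ h
      · exact absurd htw (by intro h; exact hTWev x h)
      · obtain ⟨hvx, hnxe, hxnv, hxne, hcov⟩ := htw
        have hxQ : x ∉ Q := fun hxQ => hsep v hvP x hxQ hvx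
        obtain ⟨q, hqQ, hqe⟩ : ∃ q ∈ Q, q ≠ estar := by
          obtain ⟨q1, hq1, q2, hq2, hne⟩ := Finset.one_lt_card.mp (by omega : 1 < Q.card)
          by_cases h : q1 = estar
          · exact ⟨q2, hq2, fun h2 => hne (h2 ▸ h ▸ rfl)⟩
          · exact ⟨q1, hq1, h⟩
        have hxP : x ∉ P := by
          intro hxP
          rcases hcov q with h | h | h | h | h
          · exact hdisj v hvP (h ▸ hqQ)
          · exact hxQ (h ▸ hqQ)
          · exact hqe h
          · exact hsep v hvP q hqQ h
          · exact hsep x hxP q hqQ h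
        have hxS : x ∈ S := by
          rcases hmem x with h | h | h
          · exact h
          · exact absurd h hxP
          · exact absurd h hxQ
        by_cases hxI : x ∈ I
        · constructor
          · intro a haI haP
            rcases hcov a with h | h | h | h | h
            · exact absurd (h ▸ haI) hvI
            · exact absurd (h ▸ haP) hxP
            · exact absurd (h ▸ haP) heP
            · exact h
            · exact absurd h (hind x hxI a haI (fun h2 => hxP (h2 ▸ haP)))
          · intro b hbI hbQ
            by_contra hne
            rcases hcov b with h | h | h | h | h
            · exact hdisj v hvP (h ▸ hbQ)
            · exact hxQ (h ▸ hbQ)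
            · exact hne h
            · exact hsep v hvP b hbQ h
            · exact hind x hxI b hbI (fun h2 => hxQ (h2 ▸ hbQ)) h
        · exact absurd (hSnoe x hxS hxI) (fun h => hnxe h.symm)
    obtain ⟨hA, hBQ⟩ := hAB
    -- two independent vertices in P
    obtain ⟨a1, ha1m, a2, ha2m, h12⟩ :=
      Finset.one_lt_card.mp (by omega : 1 < ((I \ S).erase estar).card)
    have ha1e : a1 ≠ estar := (Finset.mem_erase.mp ha1m).1
    have ha1I : a1 ∈ I := (Finset.mem_sdiff.mp (Finset.mem_of_mem_erase ha1m)).1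
    have ha1S : a1 ∉ S := (Finset.mem_sdiff.mp (Finset.mem_of_mem_erase ha1m)).2
    have ha2e : a2 ≠ estar := (Finset.mem_erase.mp ha2m).1
    have ha2I : a2 ∈ I := (Finset.mem_sdiff.mp (Finset.mem_of_mem_erase ha2m)).1
    have ha2S : a2 ∉ S := (Finset.mem_sdiff.mp (Finset.mem_of_mem_erase ha2m)).2
    have ha1P : a1 ∈ P := by
      rcases (hpart a1).mp ha1S with h | h
      · exact h
      · exact absurd (hBQ a1 ha1I h) ha1e
    have ha2P : a2 ∈ P := by
      rcases (hpart a2).mp ha2S with h | h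
      · exact h
      · exact absurd (hBQ a2 ha2I h) ha2e
    obtain ⟨hx2S, hx2I, hx2e, hx2na2, hx2all, hx2cov⟩ := hxf a2 ha2I ha2S ha2e
    by_cases hall : ∀ u ∈ Q, u ≠ estar → u ∉ I → G.Adj (xf a2) u
    · -- {xf a2, v} would be a 2-CDS of G
      have hx2v : G.Adj (xf a2) v := by
        rcases hx2cov v with h | h | h | h | h
        · exact absurd (h ▸ hvP) heP
        · exact absurd (hPnS v hvP) (fun _ => (hPnS v hvP) (h ▸ hx2S))
        · exact absurd (h ▸ hvP) (fun hh => hvI (h ▸ ha2I))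
        · exact absurd h hnadj_ev
        · exact h
      have hcds : G.IsCDS ↑({xf a2, v} : Finset V) := by
        apply pair_cds G hx2v
        intro z
        by_cases hz2 : z = xf a2
        · exact Or.inl hz2
        by_cases hzv : z = v
        · exact Or.inr (Or.inl hzv)
        rcases hmem z with hzS | hzP | hzQ
        · by_cases hzI : z ∈ I
          · exact Or.inr (Or.inr (Or.inl (hx2all z hzI (fun h => ha2S (h ▸ hzS)))))
          · obtain ⟨g, hgI, hgS, hge, rfl⟩ := hdec z hzS hzI
            have hga2 : g ≠ a2 := by
              rintro rfl
              exact hz2 rfl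
            have : G.Adj (xf g) v := by
              rcases (hxf g hgI hgS hge).2.2.2.2.2 v with h | h | h | h | h
              · exact absurd (h ▸ hvP) heP
              · exact absurd ((hxf g hgI hgS hge).1) (h ▸ hPnS v hvP)
              · exact absurd (h ▸ hgI) hvI
              · exact absurd h hnadj_ev
              · exact h
            exact Or.inr (Or.inr (Or.inr this.symm))
        · by_cases hzI : z ∈ I
          · exact Or.inr (Or.inr (Or.inr (hA z hzI hzP)))
          · rcases hx2cov z with h | h | h | h | h
            · exact absurd (h ▸ hzP) heP
            · exact absurd h hz2
            · exact absurd (h ▸ ha2I) hzI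
            · exact absurd h (fun hh => hsep z hzP estar heQ hh.symm)
            · exact Or.inr (Or.inr (Or.inl h))
        · by_cases hze : z = estar
          · exact Or.inr (Or.inr (Or.inl (hze ▸ hx2e.symm)))
          by_cases hzI : z ∈ I
          · exact absurd (hBQ z hzI hzQ) hze
          · exact Or.inr (Or.inr (Or.inl (hall z hzQ hze hzI)))
      have h3 := hno2 _ hcds
      have hle := Finset.card_insert_le (xf a2) ({v} : Finset V)
      simp at hle
      omega
    · push_neg at hall
      obtain ⟨u, huQ, hue, huI, hu2⟩ := hall
      have hne : a2 ≠ u := fun h => hdisj a2 ha2P (h ▸ huQ)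
      have hnadj : ¬G.Adj a2 u := hsep a2 ha2P u huQ
      rcases htri a2 u hne hnadj with hcov | ⟨x, htw⟩ | ⟨x, htw⟩
      · rcases hcov a1 with h | h | h | h
        · exact h12 (h ▸ rfl)
        · exact hdisj a1 ha1P (h ▸ huQ)
        · exact hind a2 ha2I a1 ha1I (Ne.symm h12) h
        · exact hsep a1 ha1P u huQ h.symm
      · obtain ⟨hax, hnxu, hxna2, hxnu, hcov⟩ := htw
        have hxe_ne : x ≠ estar := fun h => hsep a2 ha2P estar heQ (h ▸ hax)
        have hxe : G.Adj x estar := by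
          rcases hcov estar with h | h | h | h | h
          · exact absurd (h ▸ heQ) (fun hh => hdisj a2 ha2P hh)
          · exact absurd h (fun hh => hxe_ne hh.symm)
          · exact absurd h (fun hh => hue hh.symm)
          · exact absurd h (hsep a2 ha2P estar heQ)
          · exact h
        have hxP : x ∉ P := fun hxP => hsep x hxP estar heQ hxe
        have hxQ : x ∉ Q := fun hxQ => hsep a2 ha2P x hxQ hax
        have hxS : x ∈ S := by
          rcases hmem x with h | h | h
          · exact h
          · exact absurd h hxP
          · exact absurd h hxQ
        have hxI : x ∉ I := fun hxI => hind x hxI estar heI hxe_ne hxe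
        apply hSallI x hxS
        intro i hiI
        by_cases hia2 : i = a2
        · exact hia2 ▸ hax.symm
        rcases hcov i with h | h | h | h | h
        · exact absurd h hia2
        · exact absurd (h ▸ hiI) hxI
        · exact absurd (h ▸ hiI) huI
        · exact absurd h (hind a2 ha2I i hiI (Ne.symm hia2))
        · exact h
      · obtain ⟨hux, hnxa2, hxnu, hxna2, hcov⟩ := htw
        have hxP : x ∉ P := fun hxP => hsep x hxP u huQ hux.symm
        have hxa1 : G.Adj x a1 := by
          rcases hcov a1 with h | h | h | h | h
          · exact absurd (h ▸ ha1P) (fun hh => hdisj a1 hh (h ▸ huQ))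
          · exact absurd (h ▸ ha1P) hxP
          · exact absurd h h12
          · exact absurd h (fun hh => hsep a1 ha1P u huQ hh.symm)
          · exact h
        have hxQ : x ∉ Q := fun hxQ => hsep a1 ha1P x hxQ hxa1.symm
        have hxS : x ∈ S := by
          rcases hmem x with h | h | h
          · exact h
          · exact absurd h hxP
          · exact absurd h hxQ
        have hxI : x ∉ I := fun hxI => hind x hxI a1 ha1I (fun h => hxP (h ▸ ha1P)) hxa1
        obtain ⟨f, hfI, hfS, hfe, hxeq⟩ := hdec x hxS hxI
        have hfa2 : f = a2 := by
          by_contra hne2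
          have := (hxf f hfI hfS hfe).2.2.2.2.1 a2 ha2I (fun h => hne2 h.symm)
          rw [← hxeq] at this
          exact hnxa2 this
        rw [hfa2] at hxeq
        rw [hxeq] at hux
        exact hu2 hux.symm

end ThreeGammaC

open ThreeGammaC

theorem stmt_15 {V : Type*} [Fintype V] [DecidableEq V] (G : SimpleGraph V)
    (hG : G.IsCritical3) (S H1 H2 I : Finset V)
    (hcut : G.IsVertexCut S) (hmins : S.card = G.conn)
    (hpart : ∀ z : V, z ∉ S ↔ (z ∈ H1 ∨ z ∈ H2))
    (hdisj : Disjoint H1 H2)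
    (hsep : ∀ a ∈ H1, ∀ b ∈ H2, ¬G.Adj a b)
    (h1 : H1.Nonempty) (h2 : H2.Nonempty)
    (hI : G.IsIndepSet' ↑I) (hImax : I.card = G.indepNum')
    (hSI : 2 ≤ (S \ I).card) (ha : G.conn + 1 ≤ G.indepNum') :
    H1.card = 1 ∨ H2.card = 1 := by
  classical
  by_contra hcon
  push_neg at hcon
  obtain ⟨hn1, hn2⟩ := hcon
  have hP2 : 2 ≤ H1.card := by
    have := Finset.Nonempty.card_pos h1
    omega
  have hQ2 : 2 ≤ H2.card := by
    have := Finset.Nonempty.card_pos h2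
    omega
  obtain ⟨hGconn, h3, hcrit⟩ := hG
  have hind : ∀ a ∈ I, ∀ b ∈ I, a ≠ b → ¬G.Adj a b := by
    intro a haI b hbI hne
    exact hI (Finset.mem_coe.mpr haI) (Finset.mem_coe.mpr hbI) hne
  have htri : ∀ u v : V, u ≠ v → ¬G.Adj u v →
      (∀ z : V, z = u ∨ z = v ∨ G.Adj u z ∨ G.Adj v z) ∨
        (∃ x, TW G u v x) ∨ (∃ x, TW G v u x) :=
    fun u v h h' => trichotomy G hGconn h3 hcrit h h'
  have hno2 : ∀ D : Finset V, G.IsCDS ↑D → 3 ≤ D.card := no_small_cds G h3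
  have hdisj' : ∀ z : V, z ∈ H1 → z ∈ H2 → False :=
    fun z hz1 hz2 => Finset.disjoint_left.mp hdisj hz1 hz2
  -- arithmetic
  have hIcard : S.card + 1 ≤ I.card := by
    have e1 : S.card = G.conn := hmins
    have e2 : I.card = G.indepNum' := hImax
    omega
  have hc1 : (S \ I).card + (S ∩ I).card = S.card := Finset.card_sdiff_add_card_inter S I
  have hc2 : (I \ S).card + (I ∩ S).card = I.card := Finset.card_sdiff_add_card_inter I S
  have hcc : (S ∩ I).card = (I ∩ S).card := by rw [Finset.inter_comm]
  have hSIcS : (S \ I).card ≤ S.card := Finset.card_le_card (Finset.sdiff_subset)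
  have hJcard : (S \ I).card + 1 ≤ (I \ S).card := by omega
  have hI3 : 3 ≤ I.card := by omega
  have hJ3 : 3 ≤ (I \ S).card := by omega
  -- the witness sets
  set Ws : V → Finset V := fun e =>
    (S \ I).filter (fun x => (∀ i ∈ I, i ≠ e → G.Adj x i) ∧ ¬G.Adj x e) with hWs
  have hWmem : ∀ e x, x ∈ Ws e ↔
      (x ∈ S ∧ x ∉ I) ∧ (∀ i ∈ I, i ≠ e → G.Adj x i) ∧ ¬G.Adj x e := by
    intro e x
    rw [hWs]
    simp only [Finset.mem_filter, Finset.mem_sdiff]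
  have hWdisj : ∀ e f x : V, e ∈ I → e ≠ f → x ∈ Ws e → x ∈ Ws f → False := by
    intro e f x heI hef hxe hxf
    have h1 := ((hWmem e x).mp hxe).2.2
    have h2 := ((hWmem f x).mp hxf).2.1 e heI hef
    exact h1 h2
  -- location of witnesses
  have hW : ∀ p ∈ I, p ∉ S → ∀ q ∈ I, q ≠ p → ∀ x, TW G p q x → x ∈ Ws q := by
    intro p hpI hpS q hqI hqp x htw
    obtain ⟨hpx, hnxq, hxnp, hxnq, hcov⟩ := htw
    have hxI : x ∉ I := fun hxI => hind p hpI x hxI (Ne.symm hxnp) hpx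
    have hxall : ∀ i ∈ I, i ≠ q → G.Adj x i := by
      intro i hiI hiq
      by_cases hip : i = p
      · exact hip ▸ hpx.symm
      rcases hcov i with h | h | h | h | h
      · exact absurd h hip
      · exact absurd (h ▸ hiI) hxI
      · exact absurd h hiq
      · exact absurd h (hind p hpI i hiI (Ne.symm hip))
      · exact h
    have hxS : x ∈ S := by
      rcases (hpart p).mp hpS with hpH | hpH
      · -- p ∈ H1
        have hxH2 : x ∉ H2 := fun h => hsep p hpH x h hpx
        have hxH1 : x ∉ H1 := by
          intro hxH1
          obtain ⟨z, hzH2, hzq⟩ : ∃ z ∈ H2, z ≠ q := by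
            obtain ⟨z1, hz1, z2, hz2, hne⟩ := Finset.one_lt_card.mp (by omega : 1 < H2.card)
            by_cases h : z1 = q
            · exact ⟨z2, hz2, fun h2 => hne (h2 ▸ h ▸ rfl)⟩
            · exact ⟨z1, hz1, h⟩
          rcases hcov z with h | h | h | h | h
          · exact hdisj' p hpH (h ▸ hzH2)
          · exact hdisj' x hxH1 (h ▸ hzH2)
          · exact hzq h
          · exact hsep p hpH z hzH2 h
          · exact hsep x hxH1 z hzH2 h
        by_cases hxS : x ∈ S
        · exact hxS
        · rcases (hpart x).mp hxS with h | h
          · exact absurd h hxH1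
          · exact absurd h hxH2
      · -- p ∈ H2
        have hxH1 : x ∉ H1 := fun h => hsep x h p hpH hpx.symm
        have hxH2 : x ∉ H2 := by
          intro hxH2
          obtain ⟨z, hzH1, hzq⟩ : ∃ z ∈ H1, z ≠ q := by
            obtain ⟨z1, hz1, z2, hz2, hne⟩ := Finset.one_lt_card.mp (by omega : 1 < H1.card)
            by_cases h : z1 = q
            · exact ⟨z2, hz2, fun h2 => hne (h2 ▸ h ▸ rfl)⟩
            · exact ⟨z1, hz1, h⟩
          rcases hcov z with h | h | h | h | h
          · exact hdisj' z hzH1 (h.symm ▸ hpH)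
          · exact hdisj' z hzH1 (h.symm ▸ hxH2)
          · exact hzq h
          · exact hsep z hzH1 p hpH h.symm
          · exact hsep z hzH1 x hxH2 h.symm
        by_cases hxS : x ∈ S
        · exact hxS
        · rcases (hpart x).mp hxS with h | h
          · exact absurd h hxH1
          · exact absurd h hxH2
    exact (hWmem q x).mpr ⟨⟨hxS, hxI⟩, hxall, hnxq⟩
  -- existence of estar with empty witness set
  have hstar : ∃ e, e ∈ I ∧ e ∉ S ∧ Ws e = ∅ := by
    by_contra hno
    push_neg at hno
    have hch : ∀ e : V, ∃ x, (e ∈ I ∧ e ∉ S) → x ∈ Ws e := by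
      intro e
      by_cases h : e ∈ I ∧ e ∉ S
      · obtain ⟨x, hx⟩ := hno e h.1 h.2
        exact ⟨x, fun _ => hx⟩
      · exact ⟨e, fun h2 => absurd h2 h⟩
    choose g hg using hch
    have hmap : ∀ e ∈ I \ S, g e ∈ S \ I := by
      intro e he
      have hm := Finset.mem_sdiff.mp he
      have := (hWmem e (g e)).mp (hg e ⟨hm.1, hm.2⟩)
      exact Finset.mem_sdiff.mpr this.1
    have hinj : Set.InjOn g ↑(I \ S) := by
      intro e he f hf hef
      by_contra hne
      have hme := Finset.mem_sdiff.mp (Finset.mem_coe.mp he)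
      have hmf := Finset.mem_sdiff.mp (Finset.mem_coe.mp hf)
      exact hWdisj e f (g e) hme.1 hne (hg e ⟨hme.1, hme.2⟩) (hef ▸ hg f ⟨hmf.1, hmf.2⟩)
    have hle := Finset.card_le_card_of_injOn g hmap hinj
    omega
  obtain ⟨estar, heI, heS, hWe⟩ := hstar
  -- the key witnesses
  have hkey : ∀ f, f ∈ I → f ∉ S → f ≠ estar → ∃ x, x ∈ Ws f ∧ G.Adj estar x ∧
      ∀ z : V, z = estar ∨ z = x ∨ z = f ∨ G.Adj estar z ∨ G.Adj x z := by
    intro f hfI hfS hfe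
    have hne : estar ≠ f := Ne.symm hfe
    have hnadj : ¬G.Adj estar f := hind estar heI f hfI hne
    rcases htri estar f hne hnadj with hcov | ⟨x, htw⟩ | ⟨x, htw⟩
    · exfalso
      obtain ⟨r, hr⟩ : ((I.erase estar).erase f).Nonempty := by
        apply Finset.card_pos.mp
        have e1 : (I.erase estar).card = I.card - 1 := Finset.card_erase_of_mem heI
        have e2 := Finset.card_erase_of_mem (s := I.erase estar) (a := f)
        have e3 : ((I.erase estar).erase f).card ≥ (I.erase estar).card - 1 :=
          Finset.pred_card_le_card_erase
        omega
      have hrf : r ≠ f := (Finset.mem_erase.mp hr).1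
      have hre : r ≠ estar := (Finset.mem_erase.mp (Finset.mem_of_mem_erase hr)).1
      have hrI : r ∈ I := Finset.mem_of_mem_erase (Finset.mem_of_mem_erase hr)
      rcases hcov r with h | h | h | h
      · exact hre h
      · exact hrf h
      · exact hind estar heI r hrI (Ne.symm hre) h
      · exact hind f hfI r hrI (Ne.symm hrf) h
    · exact ⟨x, hW estar heI heS f hfI hfe x htw, htw.1, htw.2.2.2.2⟩
    · exfalso
      have := hW f hfI hfS estar heI hne x htw
      rw [hWe] at this
      exact absurd this (Finset.notMem_empty x)
  have hch2 : ∀ f : V, ∃ x, (f ∈ I ∧ f ∉ S ∧ f ≠ estar) → (x ∈ Ws f ∧ G.Adj estar x ∧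
      ∀ z : V, z = estar ∨ z = x ∨ z = f ∨ G.Adj estar z ∨ G.Adj x z) := by
    intro f
    by_cases h : f ∈ I ∧ f ∉ S ∧ f ≠ estar
    · obtain ⟨x, hx⟩ := hkey f h.1 h.2.1 h.2.2
      exact ⟨x, fun _ => hx⟩
    · exact ⟨f, fun h2 => absurd h2 h⟩
  choose xf hxf0 using hch2
  have hxfB : ∀ f, f ∈ I → f ∉ S → f ≠ estar →
      xf f ∈ S ∧ xf f ∉ I ∧ G.Adj estar (xf f) ∧ ¬G.Adj (xf f) f ∧
        (∀ i ∈ I, i ≠ f → G.Adj (xf f) i) ∧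
        ∀ z : V, z = estar ∨ z = xf f ∨ z = f ∨ G.Adj estar z ∨ G.Adj (xf f) z := by
    intro f hf1 hf2 hf3
    obtain ⟨hm, hadj, hcov⟩ := hxf0 f ⟨hf1, hf2, hf3⟩
    obtain ⟨⟨hS', hI'⟩, hall, hnadj⟩ := (hWmem f (xf f)).mp hm
    exact ⟨hS', hI', hadj, hnadj, hall, hcov⟩
  -- counting: every other vertex of S \ I is one of the witnesses
  set Js : Finset V := (I \ S).erase estar with hJs
  have hJsmem : ∀ f ∈ Js, f ∈ I ∧ f ∉ S ∧ f ≠ estar := by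
    intro f hf
    have h1 := (Finset.mem_erase.mp hf).1
    have h2 := Finset.mem_sdiff.mp (Finset.mem_of_mem_erase hf)
    exact ⟨h2.1, h2.2, h1⟩
  have hJscard : Js.card = (I \ S).card - 1 :=
    Finset.card_erase_of_mem (Finset.mem_sdiff.mpr ⟨heI, heS⟩)
  have hbsub : Js.biUnion Ws ⊆ S \ I := by
    apply Finset.biUnion_subset.mpr
    intro f _
    rw [hWs]
    exact Finset.filter_subset _ _
  have hdisjW : ∀ x ∈ Js, ∀ y ∈ Js, x ≠ y → Disjoint (Ws x) (Ws y) := by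
    intro x hx y hy hxy
    rw [Finset.disjoint_left]
    intro a hax hay
    exact hWdisj x y a (hJsmem x hx).1 hxy hax hay
  have hcardb : (Js.biUnion Ws).card = ∑ f ∈ Js, (Ws f).card := Finset.card_biUnion hdisjW
  have hge1 : ∀ f ∈ Js, 1 ≤ (Ws f).card := by
    intro f hf
    obtain ⟨h1, h2, h3⟩ := hJsmem f hf
    exact Finset.card_pos.mpr ⟨xf f, (hxf0 f ⟨h1, h2, h3⟩).1⟩
  have hsumge : Js.card ≤ ∑ f ∈ Js, (Ws f).card := by
    calc Js.card = ∑ _f ∈ Js, 1 := by rw [Finset.sum_const, smul_eq_mul, mul_one]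
    _ ≤ ∑ f ∈ Js, (Ws f).card := Finset.sum_le_sum hge1
  have hcardle : (Js.biUnion Ws).card ≤ (S \ I).card := Finset.card_le_card hbsub
  have hbeq : Js.biUnion Ws = S \ I := by
    apply Finset.eq_of_subset_of_card_le hbsub
    omega
  have hsing : ∀ f ∈ Js, (Ws f).card = 1 := by
    intro f hf
    by_contra hne
    have h2 : 2 ≤ (Ws f).card := by
      have := hge1 f hf
      omega
    have hlt : ∑ _f ∈ Js, 1 < ∑ f ∈ Js, (Ws f).card :=
      Finset.sum_lt_sum hge1 ⟨f, hf, by omega⟩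
    rw [Finset.sum_const, smul_eq_mul, mul_one] at hlt
    omega
  have hdec : ∀ x, x ∈ S → x ∉ I → ∃ f, f ∈ I ∧ f ∉ S ∧ f ≠ estar ∧ x = xf f := by
    intro x hxS hxI
    have hx : x ∈ Js.biUnion Ws := by
      rw [hbeq]
      exact Finset.mem_sdiff.mpr ⟨hxS, hxI⟩
    obtain ⟨f, hf, hxf'⟩ := Finset.mem_biUnion.mp hx
    obtain ⟨h1, h2, h3⟩ := hJsmem f hf
    have hxfmem : xf f ∈ Ws f := (hxf0 f ⟨h1, h2, h3⟩).1
    have : x = xf f := Finset.card_le_one.mp (le_of_eq (hsing f hf)) x hxf' (xf f) hxfmem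
    exact ⟨f, h1, h2, h3, this⟩
  have hJ2 : 2 ≤ Js.card := by omega
  -- apply the branch lemma according to the side of estar
  rcases (hpart estar).mp heS with heH | heH
  · -- estar ∈ H1 : apply with P := H2, Q := H1
    exact branch G S I H2 H1 estar xf hind htri hno2 hmins
      (fun z => (hpart z).trans or_comm)
      (fun z hz2 hz1 => hdisj' z hz1 hz2)
      (fun a haH2 b hbH1 h => hsep b hbH1 a haH2 h.symm)
      hQ2 hP2 heI heH hJ2 hxfB hdec
  · -- estar ∈ H2 : apply with P := H1, Q := H2
    exact branch G S I H1 H2 estar xf hind htri hno2 hmins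
      hpart hdisj' hsep hP2 hQ2 heI heH hJ2 hxfB hdec
end

section
/- Let G be a 3-γc-critical graph with a cut vertex. Then α(G) = κ(G) + 2. -/
open SimpleGraph Finset

variable {V : Type*}

/-! ### Basic lemmas about `addEdge` and connected dominating sets -/

lemma addEdge_adj (G : SimpleGraph V) (u v x y : V) :
    (G.addEdge u v).Adj x y ↔ G.Adj x y ∨ (s(x,y) = s(u,v) ∧ x ≠ y) := by
  simp [SimpleGraph.addEdge, SimpleGraph.fromEdgeSet_adj]

lemma addEdge_comm (G : SimpleGraph V) (u v : V) : G.addEdge u v = G.addEdge v u := by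
  unfold SimpleGraph.addEdge
  rw [Sym2.eq_swap]

lemma le_addEdge (G : SimpleGraph V) (u v : V) : G ≤ G.addEdge u v := le_sup_left

lemma univ_induce_connected (G : SimpleGraph V) (h : G.Connected) :
    (G.induce (Set.univ : Set V)).Connected :=
  (induceUnivIso G).connected_iff.mpr h

lemma univ_cds [Fintype V] (G : SimpleGraph V) (h : G.Connected) :
    G.IsCDS ↑(Finset.univ : Finset V) := by
  refine ⟨fun v => Or.inl (by simp), ?_⟩
  rw [Finset.coe_univ]
  exact univ_induce_connected G h

lemma cds_ge [Fintype V] {G : SimpleGraph V} (h3 : G.cdn = 3) {D : Finset V}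
    (hD : G.IsCDS ↑D) : 3 ≤ D.card := by
  have : G.cdn ≤ D.card := Nat.sInf_le ⟨D, rfl, hD⟩
  omega

lemma cds_nonempty {G : SimpleGraph V} [Nonempty V] {D : Finset V}
    (hD : G.IsCDS ↑D) : D.Nonempty := by
  obtain ⟨v⟩ := ‹Nonempty V›
  rcases hD.1 v with h | ⟨u, hu, _⟩
  · exact ⟨v, by simpa using h⟩
  · exact ⟨u, by simpa using hu⟩

lemma exists_small_cds [Fintype V] {G : SimpleGraph V} (hG : G.IsCritical3)
    {u v : V} (huv : u ≠ v) (hna : ¬G.Adj u v) :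
    ∃ D : Finset V, D.Nonempty ∧ D.card ≤ 2 ∧ (G.addEdge u v).IsCDS ↑D := by
  have hne : Nonempty V := hG.1.nonempty
  have hconn' : (G.addEdge u v).Connected := hG.1.mono (le_addEdge G u v)
  have hset : {n | ∃ D : Finset V, D.card = n ∧ (G.addEdge u v).IsCDS ↑D}.Nonempty :=
    ⟨Fintype.card V, Finset.univ, by simp, univ_cds _ hconn'⟩
  have hmem := Nat.sInf_mem hset
  obtain ⟨D, hcard, hD⟩ := hmem
  have hlt : (G.addEdge u v).cdn < 3 := hG.2.2 u v huv hna
  exact ⟨D, cds_nonempty hD, by unfold SimpleGraph.cdn at hlt; omega, hD⟩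

/-! ### The relation "same component of `G - a`" -/

/-- `x` and `y` are both different from `a` and connected in `G - a`. -/
def auxR (G : SimpleGraph V) (a x y : V) : Prop :=
  ∃ (hx : x ∈ ((↑({a} : Finset V) : Set V))ᶜ) (hy : y ∈ ((↑({a} : Finset V) : Set V))ᶜ),
    (G.induce ((↑({a} : Finset V) : Set V))ᶜ).Reachable ⟨x, hx⟩ ⟨y, hy⟩

lemma mem_compl_a {a x : V} : x ∈ ((↑({a} : Finset V) : Set V))ᶜ ↔ x ≠ a := by simp

lemma auxR_ne {G : SimpleGraph V} {a x y : V} (h : auxR G a x y) : x ≠ a ∧ y ≠ a := by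
  obtain ⟨hx, hy, -⟩ := h
  exact ⟨mem_compl_a.mp hx, mem_compl_a.mp hy⟩

lemma auxR_refl {G : SimpleGraph V} {a x : V} (h : x ≠ a) : auxR G a x x :=
  ⟨mem_compl_a.mpr h, mem_compl_a.mpr h, Reachable.refl _⟩

lemma auxR_symm {G : SimpleGraph V} {a x y : V} (h : auxR G a x y) : auxR G a y x := by
  obtain ⟨hx, hy, hr⟩ := h
  exact ⟨hy, hx, hr.symm⟩

lemma auxR_trans {G : SimpleGraph V} {a x y z : V} (h : auxR G a x y) (h' : auxR G a y z) :
    auxR G a x z := by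
  obtain ⟨hx, hy, hr⟩ := h
  obtain ⟨hy', hz, hr'⟩ := h'
  exact ⟨hx, hz, hr.trans hr'⟩

lemma adj_auxR {G : SimpleGraph V} {a x y : V} (hx : x ≠ a) (hy : y ≠ a)
    (h : G.Adj x y) : auxR G a x y := by
  refine ⟨mem_compl_a.mpr hx, mem_compl_a.mpr hy, Adj.reachable ?_⟩
  exact h

lemma not_adj_of_not_auxR {G : SimpleGraph V} {a x y : V} (hx : x ≠ a) (hy : y ≠ a)
    (h : ¬ auxR G a x y) : ¬ G.Adj x y := fun hadj => h (adj_auxR hx hy hadj)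

lemma reach_of_walk {G : SimpleGraph V} {a : V} :
    ∀ {x u : V} (p : G.Walk x u), a ∉ p.support → x ≠ a → u ≠ a → auxR G a x u := by
  intro x u p
  induction p with
  | nil => intro _ hx _; exact auxR_refl hx
  | @cons x' y' u' h q ih =>
    intro hsup hx hu
    have hy : y' ≠ a := by
      intro hya
      apply hsup
      rw [Walk.support_cons]
      right
      rw [← hya]
      exact q.start_mem_support
    have hsup' : a ∉ q.support := fun hc => hsup (by simp [Walk.support_cons, hc])
    exact auxR_trans (adj_auxR hx hy h) (ih hsup' hy hu)

/-- `a` has a neighbour in the component of `u` of `G - a`. -/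
lemma a_neighbor_in_comp {G : SimpleGraph V} {a v0 u : V} (hconn : G.Connected)
    (hv0 : v0 ≠ a) (hu : u ≠ a) (hnr : ¬ auxR G a v0 u) :
    ∃ w, G.Adj a w ∧ (w = u ∨ auxR G a w u) := by
  classical
  have key : ∀ n (x : V) (p : G.Walk x u), p.length ≤ n → x ≠ a → ¬ auxR G a x u →
      ∃ w, G.Adj a w ∧ (w = u ∨ auxR G a w u) := by
    intro n
    induction n with
    | zero =>
      intro x p hlen hx hnx
      have : x = u := (Walk.eq_of_length_eq_zero (Nat.le_zero.mp hlen))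
      exact absurd (this ▸ auxR_refl hx) hnx
    | succ n ih =>
      intro x p hlen hx hnx
      by_cases hmem : a ∈ p.support
      · set q := p.dropUntil a hmem with hq
        have hqlen : q.length ≤ p.length := p.length_dropUntil_le hmem
        cases hq' : q with
        | nil => exact absurd rfl hu
        | @cons _ y _ hadj r =>
          have hy : y ≠ a := fun h => (h ▸ hadj).ne rfl
          by_cases hyu : y = u
          · exact ⟨y, hadj, Or.inl hyu⟩
          by_cases hRy : auxR G a y u
          · exact ⟨y, hadj, Or.inr hRy⟩
          · apply ih y r ?_ hy hRy
            have : q.length = r.length + 1 := by rw [hq']; simp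
            omega
      · exact absurd (reach_of_walk p hmem hx hu) hnx
  obtain ⟨p⟩ := hconn.preconnected v0 u
  exact key p.length v0 p le_rfl hv0 hnr

lemma trick {G : SimpleGraph V} {a u0 v0 : V} (hu0 : u0 ≠ a) (hv0 : v0 ≠ a)
    (h00 : ¬ auxR G a u0 v0) {p q : V} (hpq : auxR G a p q) :
    ∃ t, t ≠ a ∧ ¬ auxR G a t p ∧ ¬ auxR G a t q := by
  by_cases h : auxR G a u0 p
  · refine ⟨v0, hv0, fun hc => h00 (auxR_trans h (auxR_symm hc)), fun hc => ?_⟩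
    exact h00 (auxR_trans (auxR_trans h hpq) (auxR_symm hc))
  · exact ⟨u0, hu0, fun hc => h hc, fun hc => h (auxR_trans hc (auxR_symm hpq))⟩

/-! ### Two-element connected dominating sets -/

lemma pair_conn (G : SimpleGraph V) {x y : V} (h : G.Adj x y) :
    (G.induce ({x, y} : Set V)).Connected := by
  rw [SimpleGraph.connected_iff]
  refine ⟨?_, ⟨⟨x, by simp⟩⟩⟩
  intro p q
  have reach : ∀ (r : ({x, y} : Set V)), (G.induce ({x, y} : Set V)).Reachable ⟨x, by simp⟩ r := by
    rintro ⟨r, hr⟩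
    rcases hr with hr | hr
    · subst hr; exact Reachable.refl _
    · simp only [Set.mem_singleton_iff] at hr
      subst hr
      exact Adj.reachable (by simpa using h)
  exact (reach p).symm.trans (reach q)

lemma two_cds_adj (G : SimpleGraph V) {x y : V} (hxy : x ≠ y)
    (hconn : (G.induce ({x, y} : Set V)).Connected) : G.Adj x y := by
  obtain ⟨p⟩ := hconn.preconnected ⟨x, by simp⟩ ⟨y, by simp⟩
  have hnil : ¬ p.Nil := by
    intro h
    exact hxy (congrArg Subtype.val h.eq)
  have hadj := Walk.adj_snd hnil
  set z := p.getVert 1 with hz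
  have hGxz : G.Adj x (z : V) := hadj
  have hzmem : (z : V) = x ∨ (z : V) = y := by
    rcases z.2 with h | h
    · exact Or.inl h
    · exact Or.inr (Set.mem_singleton_iff.mp h)
  rcases hzmem with hz' | hz'
  · rw [hz'] at hGxz; exact (G.irrefl hGxz).elim
  · rwa [hz'] at hGxz

lemma cds_drop {G : SimpleGraph V} {u v : V} {D : Finset V}
    (hD : (G.addEdge u v).IsCDS ↑D) (hu : u ∉ D) (hv : v ∉ D) : G.IsCDS ↑D := by
  constructor
  · intro z
    rcases hD.1 z with h | ⟨w, hw, hadj'⟩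
    · exact Or.inl h
    · have hwD : w ∈ D := by simpa using hw
      refine Or.inr ⟨w, hw, ?_⟩
      rcases (addEdge_adj G u v w z).mp hadj' with h | ⟨hp, hne⟩
      · exact h
      · rcases Sym2.eq_iff.mp hp with ⟨h1, h2⟩ | ⟨h1, h2⟩
        · exact absurd (h1 ▸ hwD) hu
        · exact absurd (h1 ▸ hwD) hv
  · have : G.induce (↑D : Set V) = (G.addEdge u v).induce (↑D : Set V) := by
      ext p q
      simp only [comap_adj, Function.Embedding.coe_subtype]
      constructor
      · intro h; exact ((addEdge_adj G u v _ _).mpr (Or.inl h))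
      · intro h
        rcases (addEdge_adj G u v _ _).mp h with h | ⟨hp, hne⟩
        · exact h
        · rcases Sym2.eq_iff.mp hp with ⟨h1, h2⟩ | ⟨h1, h2⟩
          · exact absurd (h1 ▸ p.2) (by simpa using hu)
          · exact absurd (h1 ▸ p.2) (by simpa using hv)
    rw [this]
    exact hD.2

lemma MX0 [Fintype V] {G : SimpleGraph V} (hcdn : G.cdn = 3) {a u v t : V}
    (hu : u ≠ a) (hv : v ≠ a) (ht : t ≠ a) (huv : u ≠ v)
    (htu : ¬ auxR G a t u) (htv : ¬ auxR G a t v)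
    {D : Finset V} (hD : (G.addEdge u v).IsCDS ↑D) (hcard : D.card ≤ 2) (huD : u ∈ D) :
    G.Adj a u ∧ ¬ G.Adj a v ∧ ∀ x, x ≠ u → x ≠ a → x ≠ v → (G.Adj u x ∨ G.Adj a x) := by
  classical
  have htu' : t ≠ u := fun h => htu (h ▸ auxR_refl ht)
  have htv' : t ≠ v := fun h => htv (h ▸ auxR_refl ht)
  have dec_u : ∀ z, z ≠ v → (G.addEdge u v).Adj u z → G.Adj u z := by
    intro z hzv h
    rcases (addEdge_adj G u v u z).mp h with h | ⟨hp, hne⟩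
    · exact h
    · rcases Sym2.eq_iff.mp hp with ⟨h1, h2⟩ | ⟨h1, h2⟩
      · exact absurd h2 hzv
      · exact absurd h1 huv
  have dom := hD.1
  have hcard1 : 1 ≤ D.card := Finset.card_pos.mpr ⟨u, huD⟩
  have hc12 : D.card = 1 ∨ D.card = 2 := by omega
  rcases hc12 with hc1 | hc2
  · -- D = {u} : impossible
    exfalso
    obtain ⟨w, hw⟩ := Finset.card_eq_one.mp hc1
    have huw : u = w := by rw [hw] at huD; simpa using huD
    subst huw
    rw [hw] at dom
    rcases dom t with h | ⟨z, hz, hadj⟩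
    · exact htu' (by simpa using h)
    · have hz' : z = u := by simpa using hz
      subst hz'
      exact htu (auxR_symm (adj_auxR hu ht (dec_u t htv' hadj)))
  · obtain ⟨c, d, hcd, hD2⟩ := Finset.card_eq_two.mp hc2
    obtain ⟨y, hyu, hDuy⟩ : ∃ y, y ≠ u ∧ D = {u, y} := by
      have : u = c ∨ u = d := by rw [hD2] at huD; simpa using huD
      rcases this with h | h
      · exact ⟨d, by rw [← h] at hcd; exact fun hh => hcd hh.symm, by rw [hD2, ← h]⟩
      · exact ⟨c, by rw [← h] at hcd; exact fun hh => hcd hh, by rw [hD2, ← h, Finset.pair_comm]⟩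
    have hDset : (↑D : Set V) = {u, y} := by rw [hDuy]; simp
    have hconn2 := hD.2
    rw [hDset] at hconn2
    have hadjuy' : (G.addEdge u v).Adj u y := two_cds_adj _ (fun h => hyu h.symm) hconn2
    by_cases hyv : y = v
    · -- D = {u, v} : impossible
      exfalso
      subst hyv
      rcases dom t with h | ⟨z, hz, hadj⟩
      · rw [hDset] at h
        rcases h with h | h
        · exact htu' h
        · exact htv' (Set.mem_singleton_iff.mp h)
      · rw [hDset] at hz
        rcases hz with hz | hz
        · subst hz
          exact htu (auxR_symm (adj_auxR hu ht (dec_u t htv' hadj)))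
        · rw [Set.mem_singleton_iff] at hz
          subst hz
          have : G.Adj z t := by
            rcases (addEdge_adj G u z z t).mp hadj with h | ⟨hp, hne⟩
            · exact h
            · rcases Sym2.eq_iff.mp hp with ⟨h1, h2⟩ | ⟨h1, h2⟩
              · exact absurd h1.symm huv
              · exact absurd h2 htu'
          exact htv (auxR_symm (adj_auxR hv ht this))
    · have hadjuy : G.Adj u y := dec_u y hyv hadjuy'
      by_cases hya : y = a
      · subst hya
        have third : ∀ x, x ≠ u → x ≠ y → x ≠ v → (G.Adj u x ∨ G.Adj y x) := by
          intro x hxu hxa hxv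
          rcases dom x with h | ⟨z, hz, hadj⟩
          · rw [hDset] at h
            rcases h with h | h
            · exact absurd h hxu
            · exact absurd (Set.mem_singleton_iff.mp h) hxa
          · rw [hDset] at hz
            rcases hz with hz | hz
            · subst hz
              exact Or.inl (dec_u x hxv hadj)
            · rw [Set.mem_singleton_iff] at hz
              subst hz
              refine Or.inr ?_
              rcases (addEdge_adj G u v z x).mp hadj with h | ⟨hp, hne⟩
              · exact h
              · rcases Sym2.eq_iff.mp hp with ⟨h1, h2⟩ | ⟨h1, h2⟩
                · exact absurd h1.symm hu
                · exact absurd h1.symm hv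
        refine ⟨hadjuy.symm, ?_, third⟩
        intro hav
        have hcds : G.IsCDS ↑({u, y} : Finset V) := by
          constructor
          · intro z
            by_cases hzu : z = u
            · left; simp [hzu]
            by_cases hza : z = y
            · left; simp [hza]
            by_cases hzv : z = v
            · right; exact ⟨y, by simp, hzv ▸ hav⟩
            · rcases third z hzu hza hzv with h | h
              · right; exact ⟨u, by simp, h⟩
              · right; exact ⟨y, by simp, h⟩
          · have hcoe : (↑({u, y} : Finset V) : Set V) = {u, y} := by simp
            rw [hcoe]
            exact pair_conn G hadjuy
        have hge := cds_ge hcdn hcds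
        rw [Finset.card_insert_of_notMem (by simpa using hu), Finset.card_singleton] at hge
        omega
      · exfalso
        have hRyu : auxR G a y u := auxR_symm (adj_auxR hu hya hadjuy)
        rcases dom t with h | ⟨z, hz, hadj⟩
        · rw [hDset] at h
          rcases h with h | h
          · exact htu' h
          · rw [Set.mem_singleton_iff] at h
            subst h
            exact htu hRyu
        · rw [hDset] at hz
          rcases hz with hz | hz
          · subst hz
            exact htu (auxR_symm (adj_auxR hu ht (dec_u t htv' hadj)))
          · rw [Set.mem_singleton_iff] at hz
            subst hz
            have hGzt : G.Adj z t := by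
              rcases (addEdge_adj G u v z t).mp hadj with h | ⟨hp, hne⟩
              · exact h
              · rcases Sym2.eq_iff.mp hp with ⟨h1, h2⟩ | ⟨h1, h2⟩
                · exact absurd h1 hyu
                · exact absurd h1 hyv
            exact htu (auxR_trans (auxR_symm (adj_auxR hya ht hGzt)) hRyu)

lemma MX [Fintype V] {G : SimpleGraph V} (hG : G.IsCritical3) {a u v t : V}
    (hu : u ≠ a) (hv : v ≠ a) (ht : t ≠ a) (huv : u ≠ v) (hnadj : ¬ G.Adj u v)
    (htu : ¬ auxR G a t u) (htv : ¬ auxR G a t v) :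
    (G.Adj a u ∧ ¬ G.Adj a v ∧ ∀ x, x ≠ u → x ≠ a → x ≠ v → (G.Adj u x ∨ G.Adj a x)) ∨
    (G.Adj a v ∧ ¬ G.Adj a u ∧ ∀ x, x ≠ v → x ≠ a → x ≠ u → (G.Adj v x ∨ G.Adj a x)) := by
  obtain ⟨D, hne, hcard, hD⟩ := exists_small_cds hG huv hnadj
  by_cases huD : u ∈ D
  · exact Or.inl (MX0 hG.2.1 hu hv ht huv htu htv hD hcard huD)
  by_cases hvD : v ∈ D
  · refine Or.inr (MX0 hG.2.1 hv hu ht huv.symm htv htu ?_ hcard hvD)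
    rw [← addEdge_comm]
    exact hD
  · exfalso
    have := cds_ge hG.2.1 (cds_drop hD huD hvD)
    omega

lemma triple_indep [DecidableEq V] {G : SimpleGraph V} {x y z : V} (hxy : x ≠ y) (hxz : x ≠ z) (hyz : y ≠ z)
    (nxy : ¬G.Adj x y) (nxz : ¬G.Adj x z) (nyz : ¬G.Adj y z) :
    G.IsIndepSet' ↑({x, y, z} : Finset V) ∧ ({x, y, z} : Finset V).card = 3 := by
  classical
  constructor
  · intro p hp q hq hpq
    simp only [Finset.coe_insert, Finset.coe_singleton, Set.mem_insert_iff,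
      Set.mem_singleton_iff] at hp hq
    rcases hp with rfl | rfl | rfl <;> rcases hq with rfl | rfl | rfl <;>
      first
        | exact absurd rfl hpq
        | exact nxy
        | exact nxz
        | exact nyz
        | exact fun h => nxy h.symm
        | exact fun h => nxz h.symm
        | exact fun h => nyz h.symm
  · rw [Finset.card_insert_of_notMem (by simp [hxy, hxz]),
      Finset.card_insert_of_notMem (by simp [hyz]), Finset.card_singleton]

lemma pairs_contra [Fintype V] {G : SimpleGraph V} (hG : G.IsCritical3) {a p q r s tpq trs : V}
    (hp : p ≠ a) (hq : q ≠ a) (hr : r ≠ a) (hs : s ≠ a)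
    (hpq : p ≠ q) (hrs : r ≠ s) (hrp : r ≠ p) (hrq : r ≠ q) (hsp : s ≠ p) (hsq : s ≠ q)
    (npq : ¬G.Adj p q) (nrs : ¬G.Adj r s) (npr : ¬G.Adj p r) (nps : ¬G.Adj p s)
    (nqr : ¬G.Adj q r) (nqs : ¬G.Adj q s)
    (htpqa : tpq ≠ a) (htpq1 : ¬ auxR G a tpq p) (htpq2 : ¬ auxR G a tpq q)
    (htrsa : trs ≠ a) (htrs1 : ¬ auxR G a trs r) (htrs2 : ¬ auxR G a trs s) : False := by
  have h1 := MX hG hp hq htpqa hpq npq htpq1 htpq2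
  have har : G.Adj a r ∧ G.Adj a s := by
    rcases h1 with ⟨_, _, third⟩ | ⟨_, _, third⟩
    · constructor
      · rcases third r hrp hr hrq with h | h
        · exact absurd h npr
        · exact h
      · rcases third s hsp hs hsq with h | h
        · exact absurd h nps
        · exact h
    · constructor
      · rcases third r hrq hr hrp with h | h
        · exact absurd h nqr
        · exact h
      · rcases third s hsq hs hsp with h | h
        · exact absurd h nqs
        · exact h
  rcases MX hG hr hs htrsa hrs nrs htrs1 htrs2 with ⟨_, hn, _⟩ | ⟨_, hn, _⟩
  · exact hn har.2
  · exact hn har.1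

lemma triple_contra [Fintype V] {G : SimpleGraph V} (hG : G.IsCritical3) {a c1 c2 c3 : V}
    (h1 : c1 ≠ a) (h2 : c2 ≠ a) (h3 : c3 ≠ a)
    (h12 : c1 ≠ c2) (h13 : c1 ≠ c3) (h23 : c2 ≠ c3)
    (n12 : ¬G.Adj c1 c2) (n13 : ¬G.Adj c1 c3) (n23 : ¬G.Adj c2 c3)
    (hR12 : auxR G a c1 c2) (hR13 : auxR G a c1 c3)
    (htr : ∀ p q : V, auxR G a p q → ∃ t, t ≠ a ∧ ¬ auxR G a t p ∧ ¬ auxR G a t q) :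
    False := by
  obtain ⟨t12, ht12a, ht12p, ht12q⟩ := htr _ _ hR12
  obtain ⟨t13, ht13a, ht13p, ht13q⟩ := htr _ _ hR13
  have hR23 : auxR G a c2 c3 := auxR_trans (auxR_symm hR12) hR13
  obtain ⟨t23, ht23a, ht23p, ht23q⟩ := htr _ _ hR23
  rcases MX hG h1 h2 ht12a h12 n12 ht12p ht12q with ⟨ha1, hna2, third⟩ | ⟨ha2, hna1, third⟩
  · have ha3 : G.Adj a c3 := by
      rcases third c3 (Ne.symm h13) h3 (Ne.symm h23) with h | h
      · exact absurd h n13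
      · exact h
    rcases MX hG h1 h3 ht13a h13 n13 ht13p ht13q with ⟨_, hn, _⟩ | ⟨_, hn, _⟩
    · exact hn ha3
    · exact hn ha1
  · have ha3 : G.Adj a c3 := by
      rcases third c3 (Ne.symm h23) h3 (Ne.symm h13) with h | h
      · exact absurd h n23
      · exact h
    rcases MX hG h2 h3 ht23a h23 n23 ht23p ht23q with ⟨_, hn, _⟩ | ⟨_, hn, _⟩
    · exact hn ha3
    · exact hn ha2


theorem stmt_17 {V : Type*} [Fintype V] (G : SimpleGraph V)
    (hG : G.IsCritical3) (a : V) (ha : G.IsVertexCut {a}) :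
    G.indepNum' = G.conn + 2 := by
  classical
  have hGconn : G.Connected := hG.1
  have hcdn : G.cdn = 3 := hG.2.1
  -- |V| ≥ 3
  have hVset : {n | ∃ D : Finset V, D.card = n ∧ G.IsCDS ↑D}.Nonempty := by
    by_contra h
    rw [Set.not_nonempty_iff_eq_empty] at h
    have h0 : G.cdn = 0 := by unfold SimpleGraph.cdn; rw [h]; simp
    omega
  have h3set := Nat.sInf_mem hVset
  have hcdn' : sInf {n | ∃ D : Finset V, D.card = n ∧ G.IsCDS ↑D} = 3 := hcdn
  rw [hcdn'] at h3set
  obtain ⟨D3, hD3card, -⟩ := h3set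
  have hcardV : 3 ≤ Fintype.card V := by
    have := Finset.card_le_univ D3
    omega
  -- separation data
  obtain ⟨b, hb⟩ : ∃ b : V, b ≠ a :=
    Fintype.exists_ne_of_one_lt_card (by omega) a
  have hnecompl : Nonempty (((↑({a} : Finset V) : Set V))ᶜ : Set V) :=
    ⟨⟨b, mem_compl_a.mpr hb⟩⟩
  have ha' : ¬ (G.induce ((↑({a} : Finset V) : Set V))ᶜ).Connected := ha
  rw [SimpleGraph.connected_iff] at ha'
  push_neg at ha'
  have hnp : ¬ (G.induce ((↑({a} : Finset V) : Set V))ᶜ).Preconnected :=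
    fun hp => (not_isEmpty_iff.mpr hnecompl) (ha' hp)
  unfold SimpleGraph.Preconnected at hnp
  push_neg at hnp
  obtain ⟨pp, qq, hnr⟩ := hnp
  have hu0 : (pp : V) ≠ a := mem_compl_a.mp pp.2
  have hv0 : (qq : V) ≠ a := mem_compl_a.mp qq.2
  have h00 : ¬ auxR G a ↑pp ↑qq := by
    rintro ⟨hx, hy, hr⟩
    exact hnr hr
  obtain ⟨u0, hu0, v0, hv0, h00⟩ :
      ∃ u0 : V, u0 ≠ a ∧ ∃ v0 : V, v0 ≠ a ∧ ¬ auxR G a u0 v0 := ⟨pp, hu0, qq, hv0, h00⟩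
  have h00' : ¬ auxR G a v0 u0 := fun h => h00 (auxR_symm h)
  have hu0v0 : u0 ≠ v0 := fun h => h00 (by cases h; exact auxR_refl hu0)
  have CR : ∀ x y : V, x ≠ a → y ≠ a → ¬ auxR G a x y → ¬ G.Adj x y :=
    fun x y hx hy h => not_adj_of_not_auxR hx hy h
  -- the connectivity is 1
  have hconn1 : G.conn = 1 := by
    have h1mem : 1 ∈ {n | ∃ S : Finset V, S.card = n ∧ G.IsVertexCut S} :=
      ⟨{a}, Finset.card_singleton a, ha⟩
    have hle : G.conn ≤ 1 := Nat.sInf_le h1mem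
    have hmem := Nat.sInf_mem (⟨1, h1mem⟩ : Set.Nonempty _)
    obtain ⟨S, hScard, hScut⟩ := hmem
    have hne0 : G.conn ≠ 0 := by
      intro h0
      have h0' : sInf {n | ∃ S : Finset V, S.card = n ∧ G.IsVertexCut S} = 0 := h0
      rw [h0'] at hScard
      have hSe : S = ∅ := Finset.card_eq_zero.mp hScard
      subst hSe
      unfold SimpleGraph.IsVertexCut at hScut
      apply hScut
      have he : ((↑(∅ : Finset V) : Set V))ᶜ = Set.univ := by simp
      rw [he]
      exact univ_induce_connected G hGconn
    omega
  rw [hconn1]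
  -- trick helper
  have htrick : ∀ p q : V, auxR G a p q →
      ∃ t, t ≠ a ∧ ¬ auxR G a t p ∧ ¬ auxR G a t q :=
    fun p q h => trick hu0 hv0 h00 h
  ------------------------------------------------------------------
  -- LOWER BOUND : an independent set of size 3 exists
  ------------------------------------------------------------------
  have h3mem : ∃ s : Finset V, G.IsIndepSet' ↑s ∧ s.card = 3 := by
    by_contra hno
    push_neg at hno
    have htriple : ∀ x y z : V, x ≠ y → x ≠ z → y ≠ z →
        ¬G.Adj x y → ¬G.Adj x z → ¬G.Adj y z → False := by
      intro x y z hh1 hh2 hh3 n1 n2 n3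
      obtain ⟨hi, hc⟩ := triple_indep hh1 hh2 hh3 n1 n2 n3
      exact hno {x, y, z} hi hc
    have clique1 : ∀ x x' : V, auxR G a x u0 → auxR G a x' u0 → x ≠ x' → G.Adj x x' := by
      intro x x' hx hx' hne
      by_contra hnadj
      have hxv0 : ¬ auxR G a x v0 := fun h => h00 (auxR_trans (auxR_symm hx) h)
      have hx'v0 : ¬ auxR G a x' v0 := fun h => h00 (auxR_trans (auxR_symm hx') h)
      have hxne : x ≠ v0 := fun h => hxv0 (by cases h; exact auxR_refl (auxR_ne hx).1)
      have hx'ne : x' ≠ v0 := fun h => hx'v0 (by cases h; exact auxR_refl (auxR_ne hx').1)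
      exact htriple x x' v0 hne hxne hx'ne hnadj
        (CR x v0 (auxR_ne hx).1 hv0 hxv0) (CR x' v0 (auxR_ne hx').1 hv0 hx'v0)
    have clique2 : ∀ x x' : V, auxR G a x v0 → auxR G a x' v0 → x ≠ x' → G.Adj x x' := by
      intro x x' hx hx' hne
      by_contra hnadj
      have hxu0 : ¬ auxR G a x u0 := fun h => h00' (auxR_trans (auxR_symm hx) h)
      have hx'u0 : ¬ auxR G a x' u0 := fun h => h00' (auxR_trans (auxR_symm hx') h)
      have hxne : x ≠ u0 := fun h => hxu0 (by cases h; exact auxR_refl (auxR_ne hx).1)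
      have hx'ne : x' ≠ u0 := fun h => hx'u0 (by cases h; exact auxR_refl (auxR_ne hx').1)
      exact htriple x x' u0 hne hxne hx'ne hnadj
        (CR x u0 (auxR_ne hx).1 hu0 hxu0) (CR x' u0 (auxR_ne hx').1 hu0 hx'u0)
    have noThird : ∀ z : V, z ≠ a → auxR G a z u0 ∨ auxR G a z v0 := by
      intro z hz
      by_contra hcon
      push_neg at hcon
      have hzu : u0 ≠ z := fun h => hcon.1 (by cases h; exact auxR_refl hu0)
      have hzv : z ≠ v0 := fun h => hcon.2 (by cases h; exact auxR_refl hz)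
      exact htriple u0 z v0 (fun h => hzu h) hu0v0 hzv
        (CR u0 z hu0 hz (fun h => hcon.1 (auxR_symm h))) (CR u0 v0 hu0 hv0 h00)
        (CR z v0 hz hv0 hcon.2)
    have main : ∀ p q : V, p ≠ a → q ≠ a → ¬ auxR G a p q →
        (∀ x x' : V, auxR G a x q → auxR G a x' q → x ≠ x' → G.Adj x x') →
        (∀ x : V, auxR G a x p → G.Adj a x) →
        (∀ z : V, z ≠ a → auxR G a z p ∨ auxR G a z q) → False := by
      intro p q hp hq hpq hclq hdomp hnt
      obtain ⟨w, haw, hwq⟩ := a_neighbor_in_comp hGconn hp hq hpq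
      have hwa : w ≠ a := haw.ne'
      have hRwq : auxR G a w q := by
        rcases hwq with h' | h'
        · exact (by cases h'; exact auxR_refl hq : auxR G a w q)
        · exact h'
      have hcds : G.IsCDS ↑({w, a} : Finset V) := by
        constructor
        · intro z
          by_cases hzw : z = w
          · left; simp [hzw]
          by_cases hza : z = a
          · left; simp [hza]
          rcases hnt z hza with h | h
          · right; exact ⟨a, by simp, hdomp z h⟩
          · right
            exact ⟨w, by simp, hclq w z hRwq h (fun hh => hzw hh.symm)⟩
        · have hcoe : (↑({w, a} : Finset V) : Set V) = {w, a} := by simp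
          rw [hcoe]
          exact pair_conn G haw.symm
      have hge := cds_ge hcdn hcds
      rw [Finset.card_insert_of_notMem (by simpa using hwa), Finset.card_singleton] at hge
      omega
    by_cases hcase : ∀ x : V, auxR G a x u0 → G.Adj a x
    · exact main u0 v0 hu0 hv0 h00 clique2 hcase noThird
    push_neg at hcase
    obtain ⟨x1, hx1R, hx1n⟩ := hcase
    by_cases hcase2 : ∀ x : V, auxR G a x v0 → G.Adj a x
    · exact main v0 u0 hv0 hu0 h00' clique1 hcase2
        (fun z hz => (noThird z hz).symm)
    push_neg at hcase2
    obtain ⟨y1, hy1R, hy1n⟩ := hcase2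
    have hx1a : x1 ≠ a := (auxR_ne hx1R).1
    have hy1a : y1 ≠ a := (auxR_ne hy1R).1
    have hx1y1 : x1 ≠ y1 := fun h => h00 (auxR_trans (auxR_symm hx1R) (by cases h; exact hy1R))
    exact htriple x1 a y1 hx1a hx1y1 (Ne.symm hy1a)
      (fun h => hx1n h.symm)
      (CR x1 y1 hx1a hy1a (fun h => h00 (auxR_trans (auxR_symm hx1R) (auxR_trans h hy1R))))
      hy1n
  ------------------------------------------------------------------
  -- UPPER BOUND : no independent set of size ≥ 4
  ------------------------------------------------------------------
  have hub : ∀ n ∈ {n | ∃ s : Finset V, G.IsIndepSet' ↑s ∧ s.card = n}, n ≤ 3 := by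
    rintro n ⟨s, hsind, rfl⟩
    by_contra hn4
    push_neg at hn4
    obtain ⟨t, hts, htc⟩ := Finset.exists_subset_card_eq (show 4 ≤ s.card by omega)
    obtain ⟨b1, hb1⟩ := Finset.card_pos.mp (show 0 < t.card by omega)
    have herasec : (t.erase b1).card = 3 := by
      rw [Finset.card_erase_of_mem hb1]; omega
    obtain ⟨b2, b3, b4, h23, h24, h34, herase⟩ := Finset.card_eq_three.mp herasec
    have hb2e : b2 ∈ t.erase b1 := herase ▸ (by simp : b2 ∈ ({b2, b3, b4} : Finset V))
    have hb3e : b3 ∈ t.erase b1 := herase ▸ (by simp : b3 ∈ ({b2, b3, b4} : Finset V))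
    have hb4e : b4 ∈ t.erase b1 := herase ▸ (by simp : b4 ∈ ({b2, b3, b4} : Finset V))
    have hb2 : b2 ∈ t := Finset.mem_of_mem_erase hb2e
    have hb3 : b3 ∈ t := Finset.mem_of_mem_erase hb3e
    have hb4 : b4 ∈ t := Finset.mem_of_mem_erase hb4e
    have h12 : b1 ≠ b2 := fun h => (Finset.ne_of_mem_erase hb2e) h.symm
    have h13 : b1 ≠ b3 := fun h => (Finset.ne_of_mem_erase hb3e) h.symm
    have h14 : b1 ≠ b4 := fun h => (Finset.ne_of_mem_erase hb4e) h.symm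
    have nadj : ∀ x y : V, x ∈ t → y ∈ t → x ≠ y → ¬ G.Adj x y := by
      intro x y hx hy hne
      exact hsind (Finset.mem_coe.mpr (hts hx)) (Finset.mem_coe.mpr (hts hy)) hne
    have n12 : ¬ G.Adj b1 b2 := nadj _ _ hb1 hb2 h12
    have n13 : ¬ G.Adj b1 b3 := nadj _ _ hb1 hb3 h13
    have n14 : ¬ G.Adj b1 b4 := nadj _ _ hb1 hb4 h14
    have n23 : ¬ G.Adj b2 b3 := nadj _ _ hb2 hb3 h23
    have n24 : ¬ G.Adj b2 b4 := nadj _ _ hb2 hb4 h24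
    have n34 : ¬ G.Adj b3 b4 := nadj _ _ hb3 hb4 h34
    -- case where one of the four equals a
    have caseA : ∀ c1 c2 c3 : V, c1 ≠ a → c2 ≠ a → c3 ≠ a → c1 ≠ c2 → c1 ≠ c3 → c2 ≠ c3 →
        ¬G.Adj c1 c2 → ¬G.Adj c1 c3 → ¬G.Adj c2 c3 →
        ¬G.Adj a c1 → ¬G.Adj a c2 → ¬G.Adj a c3 → False := by
      intro c1 c2 c3 hc1 hc2 hc3 hc12 hc13 hc23 m12 m13 m23 na1 na2 na3
      by_cases hR12 : auxR G a c1 c2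
      · obtain ⟨tt, htta, htt1, htt2⟩ := htrick _ _ hR12
        rcases MX hG hc1 hc2 htta hc12 m12 htt1 htt2 with ⟨h, -, -⟩ | ⟨h, -, -⟩
        · exact na1 h
        · exact na2 h
      by_cases hR13 : auxR G a c1 c3
      · obtain ⟨tt, htta, htt1, htt2⟩ := htrick _ _ hR13
        rcases MX hG hc1 hc3 htta hc13 m13 htt1 htt2 with ⟨h, -, -⟩ | ⟨h, -, -⟩
        · exact na1 h
        · exact na3 h
      by_cases hR23 : auxR G a c2 c3
      · obtain ⟨tt, htta, htt1, htt2⟩ := htrick _ _ hR23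
        rcases MX hG hc2 hc3 htta hc23 m23 htt1 htt2 with ⟨h, -, -⟩ | ⟨h, -, -⟩
        · exact na2 h
        · exact na3 h
      · rcases MX hG hc1 hc2 hc3 hc12 m12
          (fun h => hR13 (auxR_symm h)) (fun h => hR23 (auxR_symm h)) with
          ⟨h, -, -⟩ | ⟨h, -, -⟩
        · exact na1 h
        · exact na2 h
    by_cases hA : b1 = a ∨ b2 = a ∨ b3 = a ∨ b4 = a
    · rcases hA with rfl | rfl | rfl | rfl
      · exact caseA b2 b3 b4 (Ne.symm h12) (Ne.symm h13) (Ne.symm h14) h23 h24 h34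
          n23 n24 n34 n12 n13 n14
      · exact caseA b1 b3 b4 h12 (Ne.symm h23) (Ne.symm h24) h13 h14 h34
          n13 n14 n34 (fun h => n12 h.symm) n23 n24
      · exact caseA b1 b2 b4 h13 h23 (Ne.symm h34) h12 h14 h24
          n12 n14 n24 (fun h => n13 h.symm) (fun h => n23 h.symm) n34
      · exact caseA b1 b2 b3 h14 h24 h34 h12 h13 h23
          n12 n13 n23 (fun h => n14 h.symm) (fun h => n24 h.symm) (fun h => n34 h.symm)
    · push_neg at hA
      obtain ⟨ha1, ha2, ha3, ha4⟩ := hA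
      by_cases hR12 : auxR G a b1 b2
      · by_cases hR13 : auxR G a b1 b3
        · exact triple_contra hG ha1 ha2 ha3 h12 h13 h23 n12 n13 n23 hR12 hR13 htrick
        by_cases hR14 : auxR G a b1 b4
        · exact triple_contra hG ha1 ha2 ha4 h12 h14 h24 n12 n14 n24 hR12 hR14 htrick
        by_cases hR34 : auxR G a b3 b4
        · obtain ⟨t1, t1a, t1p, t1q⟩ := htrick _ _ hR12
          obtain ⟨t2, t2a, t2p, t2q⟩ := htrick _ _ hR34
          exact pairs_contra hG ha1 ha2 ha3 ha4 h12 h34 (Ne.symm h13) (Ne.symm h23)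
            (Ne.symm h14) (Ne.symm h24) n12 n34 n13 n14 n23 n24 t1a t1p t1q t2a t2p t2q
        · obtain ⟨t1, t1a, t1p, t1q⟩ := htrick _ _ hR12
          exact pairs_contra hG ha1 ha2 ha3 ha4 h12 h34 (Ne.symm h13) (Ne.symm h23)
            (Ne.symm h14) (Ne.symm h24) n12 n34 n13 n14 n23 n24 t1a t1p t1q ha1 hR13 hR14
      · by_cases hR34 : auxR G a b3 b4
        · by_cases hR31 : auxR G a b3 b1
          · exact triple_contra hG ha1 ha3 ha4 h13 h14 h34 n13 n14 n34
              (auxR_symm hR31) (auxR_trans (auxR_symm hR31) hR34) htrick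
          by_cases hR32 : auxR G a b3 b2
          · exact triple_contra hG ha2 ha3 ha4 h23 h24 h34 n23 n24 n34
              (auxR_symm hR32) (auxR_trans (auxR_symm hR32) hR34) htrick
          · obtain ⟨t2, t2a, t2p, t2q⟩ := htrick _ _ hR34
            exact pairs_contra hG ha1 ha2 ha3 ha4 h12 h34 (Ne.symm h13) (Ne.symm h23)
              (Ne.symm h14) (Ne.symm h24) n12 n34 n13 n14 n23 n24 ha3 hR31 hR32 t2a t2p t2q
        · by_cases hR13 : auxR G a b1 b3
          · have hn14 : ¬ auxR G a b1 b4 := fun h => hR34 (auxR_trans (auxR_symm hR13) h)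
            obtain ⟨t1, t1a, t1p, t1q⟩ := htrick _ _ hR13
            exact pairs_contra hG ha1 ha3 ha2 ha4 h13 h24 (Ne.symm h12) h23
              (Ne.symm h14) (Ne.symm h34) n13 n24 n12 n14 (fun h => n23 h.symm) n34
              t1a t1p t1q ha1 hR12 hn14
          by_cases hR14 : auxR G a b1 b4
          · obtain ⟨t1, t1a, t1p, t1q⟩ := htrick _ _ hR14
            exact pairs_contra hG ha1 ha4 ha2 ha3 h14 h23 (Ne.symm h12) h24
              (Ne.symm h13) h34 n14 n23 n12 n13 (fun h => n24 h.symm) (fun h => n34 h.symm)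
              t1a t1p t1q ha1 hR12 hR13
          by_cases hR23 : auxR G a b2 b3
          · have hn24 : ¬ auxR G a b2 b4 := fun h => hR34 (auxR_trans (auxR_symm hR23) h)
            obtain ⟨t1, t1a, t1p, t1q⟩ := htrick _ _ hR23
            exact pairs_contra hG ha2 ha3 ha1 ha4 h23 h14 h12 h13
              (Ne.symm h24) (Ne.symm h34) n23 n14 (fun h => n12 h.symm) n24
              (fun h => n13 h.symm) n34 t1a t1p t1q ha2
              (fun h => hR12 (auxR_symm h)) hn24
          by_cases hR24 : auxR G a b2 b4
          · obtain ⟨t1, t1a, t1p, t1q⟩ := htrick _ _ hR24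
            exact pairs_contra hG ha2 ha4 ha1 ha3 h24 h13 h12 h14
              (Ne.symm h23) h34 n24 n13 (fun h => n12 h.symm) n23
              (fun h => n14 h.symm) (fun h => n34 h.symm) t1a t1p t1q ha2
              (fun h => hR12 (auxR_symm h)) hR23
          · exact pairs_contra hG ha1 ha2 ha3 ha4 h12 h34 (Ne.symm h13) (Ne.symm h23)
              (Ne.symm h14) (Ne.symm h24) n12 n34 n13 n14 n23 n24
              ha3 (fun h => hR13 (auxR_symm h)) (fun h => hR23 (auxR_symm h))
              ha1 hR13 hR14
  ------------------------------------------------------------------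
  -- conclusion
  ------------------------------------------------------------------
  obtain ⟨s3, hs3i, hs3c⟩ := h3mem
  have h3in : 3 ∈ {n | ∃ s : Finset V, G.IsIndepSet' ↑s ∧ s.card = n} := ⟨s3, hs3i, hs3c⟩
  have hbdd : BddAbove {n | ∃ s : Finset V, G.IsIndepSet' ↑s ∧ s.card = n} :=
    ⟨3, fun n hn => hub n hn⟩
  have hind : G.indepNum' = 3 := by
    unfold SimpleGraph.indepNum'
    exact le_antisymm (csSup_le ⟨3, h3in⟩ hub) (le_csSup hbdd h3in)
  omega
end

section
/- If a graph G is Hamiltonian connected, then for every vertex cut S of G, the number of components of G − S is at most |S| − 1. -/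
open SimpleGraph Finset

variable {V : Type*}

/-- `G` is Hamiltonian connected: every two vertices are joined by a Hamiltonian path. -/
def SimpleGraph.HamiltonianConnected {V : Type*} [DecidableEq V] (G : SimpleGraph V) : Prop :=
  ∀ u v : V, u ≠ v → ∃ p : G.Walk u v, p.IsHamiltonian

lemma reach_induce {V : Type*} {G : SimpleGraph V} {s : Set V} :
    ∀ {x y : V} (p : G.Walk x y) (hsup : ∀ z ∈ p.support, z ∈ s),
    (G.induce s).Reachable ⟨x, hsup x p.start_mem_support⟩ ⟨y, hsup y p.end_mem_support⟩ := by
  intro x y p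
  induction p with
  | nil => intro _; exact Reachable.refl _
  | cons h q ih =>
    intro hsup
    have hsup' : ∀ z ∈ q.support, z ∈ s := fun z hz => hsup z (by simp [hz])
    refine Reachable.trans (Adj.reachable ?_) (ih hsup')
    exact h

lemma support_getD {V : Type*} {G : SimpleGraph V} {x y : V} (p : G.Walk x y) (d : V) :
    ∀ n : ℕ, n ≤ p.length → p.support.getD n d = p.getVert n := by
  induction p with
  | nil =>
    intro n hn
    have h0 : n = 0 := by simpa using hn
    subst h0
    simp
  | cons h q ih =>
    intro n hn
    cases n with
    | zero => simp
    | succ m =>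
      simp only [SimpleGraph.Walk.support_cons, List.getD_cons_succ,
        SimpleGraph.Walk.getVert_cons_succ]
      exact ih m (by simpa using hn)

theorem stmt_18' {V : Type*} [Fintype V] [DecidableEq V] (G : SimpleGraph V)
    (hG : (∀ u v : V, u ≠ v → ∃ p : G.Walk u v, p.IsHamiltonian))
    (S : Finset V) (hS : ¬(G.induce ((↑S : Set V)ᶜ)).Connected) :
    Nat.card ((G.induce ((↑S : Set V)ᶜ)).ConnectedComponent) ≤ S.card - 1 := by
  classical
  set Sc : Set V := (↑S : Set V)ᶜ with hSc
  set H : SimpleGraph Sc := G.induce Sc with hH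
  by_cases hne : Nonempty Sc
  swap
  · haveI : IsEmpty Sc := not_nonempty_iff.mp hne
    haveI : IsEmpty H.ConnectedComponent :=
      ⟨fun c => c.ind (fun v => isEmptyElim v)⟩
    simp [Nat.card_of_isEmpty]
  -- get two non-reachable vertices
  haveI := hne
  have hpre : ¬ H.Preconnected := fun h => hS (SimpleGraph.Connected.mk h)
  rw [SimpleGraph.Preconnected] at hpre
  push_neg at hpre
  obtain ⟨a, b, hab⟩ := hpre
  have habne : (a : V) ≠ (b : V) := by
    intro h
    exact hab (by rw [Subtype.ext h])
  -- |S| ≥ 2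
  have h2 : 2 ≤ S.card := by
    by_contra h1
    push_neg at h1
    interval_cases h : S.card
    · -- S empty
      have hSe : S = ∅ := Finset.card_eq_zero.mp h
      obtain ⟨p, hp⟩ := hG a b habne
      have hsup : ∀ z ∈ p.support, z ∈ Sc := by
        intro z _; simp [hSc, hSe]
      exact hab (reach_induce p hsup)
    · -- S = {x}
      obtain ⟨x, hx⟩ := Finset.card_eq_one.mp h
      have hax : (a : V) ≠ x := by
        have := a.2; simp [hSc, hx] at this; exact this
      have hbx : (b : V) ≠ x := by
        have := b.2; simp [hSc, hx] at this; exact this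
      obtain ⟨p, hp⟩ := hG a x hax
      have hb : (b : V) ∈ p.support := hp.mem_support b
      have hsup : ∀ z ∈ (p.takeUntil b hb).support, z ∈ Sc := by
        intro z hz
        simp only [hSc, hx, Set.mem_compl_iff, Finset.coe_singleton, Set.mem_singleton_iff]
        intro hzx
        subst hzx
        have hcount := hp z
        rw [← SimpleGraph.Walk.take_spec p hb, SimpleGraph.Walk.support_append,
          List.count_append] at hcount
        have h1' : 0 < (p.takeUntil b hb).support.count z := List.count_pos_iff.mpr hz
        have h2' : 0 < ((p.dropUntil b hb).support.tail).count z := by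
          apply List.count_pos_iff.mpr
          have hzend : z ∈ (p.dropUntil b hb).support :=
            SimpleGraph.Walk.end_mem_support _
          rw [SimpleGraph.Walk.support_eq_cons] at hzend
          rcases List.mem_cons.mp hzend with h' | h'
          · exact absurd h'.symm hbx
          · exact h'
        omega
      exact hab (reach_induce (p.takeUntil b hb) hsup)
  -- main argument
  obtain ⟨u, hu, v, hv, huv⟩ := Finset.one_lt_card.mp h2
  obtain ⟨p, hp⟩ := hG u v huv
  set L : List V := p.support with hL
  have hnd : L.Nodup := hp.isPath.support_nodup
  have hmemL : ∀ z : V, z ∈ L := fun z => hp.mem_support z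
  have hchain : List.IsChain G.Adj L := p.isChain_adj_support
  have hLlen : L.length = p.length + 1 := p.length_support
  have hplen : 1 ≤ p.length := by
    rcases Nat.eq_zero_or_pos p.length with h0 | h0
    · exact absurd (SimpleGraph.Walk.eq_of_length_eq_zero h0) huv
    · exact h0
  set g : ℕ → V := fun n => L.getD n u with hg
  have hgidx : ∀ z : V, g (L.idxOf z) = z := by
    intro z
    rw [hg]
    simp only
    rw [List.getD_eq_getElem L u (List.idxOf_lt_length_iff.mpr (hmemL z))]
    exact List.getElem_idxOf _
  have hidxg : ∀ n : ℕ, n < L.length → L.idxOf (g n) = n := by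
    intro n hn
    rw [hg]
    simp only
    rw [List.getD_eq_getElem L u hn]
    exact List.Nodup.idxOf_getElem hnd _ _
  have hginj : ∀ m n : ℕ, m < L.length → n < L.length → g m = g n → m = n := by
    intro m n hm hn h
    rw [← hidxg m hm, ← hidxg n hn, h]
  have hadjD : ∀ n : ℕ, n + 1 < L.length → G.Adj (g n) (g (n + 1)) := by
    intro n hn
    have h := List.isChain_iff_getElem.mp hchain n (by omega)
    have e1 : g n = L.get ⟨n, by omega⟩ := by
      rw [hg]; simp only
      rw [List.getD_eq_getElem L u (by omega)]; simp
    have e2 : g (n + 1) = L.get ⟨n + 1, by omega⟩ := by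
      rw [hg]; simp only
      rw [List.getD_eq_getElem L u hn]; simp
    rw [e1, e2]; exact h
  have hidxu : L.idxOf u = 0 := by
    rw [hL, SimpleGraph.Walk.support_eq_cons]
    exact List.idxOf_cons_self
  have hgv : ∀ n : ℕ, n ≤ p.length → g n = p.getVert n := by
    intro n hn
    rw [hg]; simp only
    rw [hL]
    exact support_getD p u n hn
  have hidxv : L.idxOf v = p.length := by
    have hgl : g p.length = v := by rw [hgv p.length le_rfl]; exact p.getVert_length
    have h := hidxg p.length (by omega)
    rw [hgl] at h
    exact h
  -- index set of a component
  set IC : H.ConnectedComponent → Set ℕ :=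
    fun C => {n | ∃ w : Sc, H.connectedComponentMk w = C ∧ L.idxOf (w : V) = n} with hIC
  have hICne : ∀ C, (IC C).Nonempty := by
    intro C
    obtain ⟨w, hw⟩ := C.exists_rep
    exact ⟨L.idxOf (w : V), w, hw, rfl⟩
  have key : ∀ C : H.ConnectedComponent,
      1 ≤ sInf (IC C) ∧ sInf (IC C) < L.length ∧
      (∃ w : Sc, H.connectedComponentMk w = C ∧ g (sInf (IC C)) = (w : V)) := by
    intro C
    obtain ⟨w, hwC, hwi⟩ := Nat.sInf_mem (hICne C)
    have hlt : sInf (IC C) < L.length := by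
      rw [← hwi]; exact List.idxOf_lt_length_iff.mpr (hmemL _)
    have hval : g (sInf (IC C)) = (w : V) := by
      rw [← hwi]; exact hgidx _
    refine ⟨?_, hlt, w, hwC, hval⟩
    by_contra h0
    push_neg at h0
    have h00 : sInf (IC C) = 0 := by omega
    have : (w : V) = u := by
      apply (List.idxOf_inj (hmemL _)).mp
      rw [hwi, hidxu, h00]
    have hws := w.2
    rw [this] at hws
    exact hws hu
  -- the predecessor is in S
  have pred_mem : ∀ C : H.ConnectedComponent, g (sInf (IC C) - 1) ∈ S := by
    intro C
    obtain ⟨h1, hlt, w, hwC, hval⟩ := key C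
    by_contra hnotS
    have hmemSc : g (sInf (IC C) - 1) ∈ Sc := by simp [hSc, hnotS]
    have hadj : G.Adj (g (sInf (IC C) - 1)) (g (sInf (IC C))) := by
      have := hadjD (sInf (IC C) - 1) (by omega)
      rwa [Nat.sub_add_cancel h1] at this
    have hadjH : H.Adj ⟨g (sInf (IC C) - 1), hmemSc⟩ w := by
      rw [hval] at hadj
      exact hadj
    have hmk : H.connectedComponentMk ⟨g (sInf (IC C) - 1), hmemSc⟩ = C :=
      Eq.trans (SimpleGraph.ConnectedComponent.connectedComponentMk_eq_of_adj hadjH) hwC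
    have hidx : L.idxOf (g (sInf (IC C) - 1)) = sInf (IC C) - 1 :=
      hidxg _ (by omega)
    have hmem' : sInf (IC C) - 1 ∈ IC C := ⟨_, hmk, hidx⟩
    have := Nat.sInf_le hmem'
    omega
  -- the injection
  set f : H.ConnectedComponent → V := fun C => g (sInf (IC C) - 1) with hf
  have hfS : ∀ C, f C ∈ S.erase v := by
    intro C
    obtain ⟨h1, hlt, _, _, _⟩ := key C
    rw [Finset.mem_erase]
    refine ⟨?_, pred_mem C⟩
    intro hfv
    have hidx1 : L.idxOf (f C) = sInf (IC C) - 1 := hidxg _ (by omega)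
    rw [hfv, hidxv] at hidx1
    omega
  have hfinj : Function.Injective f := by
    intro C1 C2 hC
    obtain ⟨h11, hlt1, w1, hw1C, hval1⟩ := key C1
    obtain ⟨h12, hlt2, w2, hw2C, hval2⟩ := key C2
    have heq : sInf (IC C1) - 1 = sInf (IC C2) - 1 :=
      hginj _ _ (by omega) (by omega) hC
    have heq2 : sInf (IC C1) = sInf (IC C2) := by omega
    have hww : (w1 : V) = (w2 : V) := by
      rw [← hval1, ← hval2, heq2]
    rw [← hw1C, ← hw2C, Subtype.ext hww]
  -- conclude
  have hcard : Nat.card H.ConnectedComponent ≤ Nat.card (S.erase v : Finset V) :=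
    Nat.card_le_card_of_injective (fun C => (⟨f C, hfS C⟩ : (S.erase v : Finset V)))
      (fun C1 C2 h => hfinj (congrArg Subtype.val h))
  rw [Nat.card_eq_finsetCard, Finset.card_erase_of_mem hv] at hcard
  exact hcard

theorem stmt_18 {V : Type*} [Fintype V] [DecidableEq V] (G : SimpleGraph V)
    (hG : G.HamiltonianConnected) (S : Finset V) (hS : G.IsVertexCut S) :
    Nat.card ((G.induce ((↑S : Set V)ᶜ)).ConnectedComponent) ≤ S.card - 1 := stmt_18' G hG S hS
end

section
/- For s ≥ 4, the graph G in 𝒢₁(1, 1, ..., 1) (all b_i = 1) satisfies κ(G) = δ(G) ≥ 3 but is not Hamiltonian connected: removing the cut set S = {y, x, x₁, ..., x_{s−1}} of size s + 1 leaves s + 1 isolated components a₀, a₁, ..., a_s, so ω(G − S) = |S|. -/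
open SimpleGraph Finset

private lemma edgeless_not_connected' {α : Type*} {H : SimpleGraph α} (hE : ∀ a b, ¬H.Adj a b)
    {u v : α} (huv : u ≠ v) : ¬H.Connected := by
  intro hc
  obtain ⟨w⟩ := hc.preconnected u v
  cases w with
  | nil => exact huv rfl
  | cons ha _ => exact hE _ _ ha

private lemma isolated_not_connected' {α : Type*} {H : SimpleGraph α} {u v : α} (hne : u ≠ v)
    (hu : ∀ w, ¬H.Adj u w) : ¬H.Connected := by
  intro hc
  obtain ⟨w⟩ := hc.preconnected u v
  cases w with
  | nil => exact hne rfl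
  | cons ha _ => exact hu _ ha

private lemma edgeless_card_components' {α : Type*} (H : SimpleGraph α) (hE : ∀ a b, ¬H.Adj a b) :
    Nat.card H.ConnectedComponent = Nat.card α := by
  refine (Nat.card_eq_of_bijective H.connectedComponentMk ⟨?_, ?_⟩).symm
  · intro a b hab
    obtain ⟨w⟩ := ConnectedComponent.exact hab
    cases w with
    | nil => rfl
    | cons ha _ => exact absurd ha (hE _ _)
  · exact fun c => c.exists_rep

private lemma countP_chain'' {α : Type*} (P : α → Bool) :
    ∀ l : List α, l.Chain' (fun a b => ¬(P a = true ∧ P b = true)) →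
      2 * l.countP P ≤ l.length + 1
  | [] => by intro; simp
  | [a] => by intro; simp [List.countP_cons]; split <;> omega
  | a :: b :: t => by
      intro hc
      replace hc := List.isChain_cons_cons.1 hc
      have h2 := countP_chain'' P t hc.2.tail
      have h1 := countP_chain'' P (b :: t) hc.2
      rw [List.countP_cons] at h1
      rw [List.countP_cons, List.countP_cons]
      simp only [List.length_cons] at *
      by_cases hpa : P a = true <;> by_cases hpb : P b = true
      · exact absurd ⟨hpa, hpb⟩ hc.1
      all_goals simp only [hpa, hpb, Bool.false_eq_true, if_true, if_false] at * <;> omega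


variable {V : Type*}

private lemma chain'_ends_drop {α : Type*} (P : α → Bool) (a b : α) (t : List α)
    (hc : (a :: (t ++ [b])).Chain' (fun u v => ¬(P u = true ∧ P v = true))) :
    t.Chain' (fun u v => ¬(P u = true ∧ P v = true)) := by
  have h1 := hc.tail
  have h2 : ((t ++ [b]).reverse).Chain' (fun u v => ¬(P u = true ∧ P v = true)) :=
    List.isChain_reverse.2 (h1.imp fun u v h => fun hx => h ⟨hx.2, hx.1⟩)
  rw [List.reverse_append, List.reverse_singleton, List.singleton_append] at h2
  have h3 := h2.tail
  have h4 := List.isChain_reverse.1 h3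
  exact h4.imp fun u v h => fun hx => h ⟨hx.2, hx.1⟩

/-- One-sided description of the edges in the family `𝒢₁(b₀, …, b_{s-1})`.
`A i` (for `0 ≤ i ≤ s`) are the vertices `aᵢ`, `B j` (for `0 ≤ j ≤ s-1`) the sets `Bⱼ`,
`x` the special vertex, and `bb` the fixed vertex `b ∈ B₀`. -/
def G1Half {V : Type*} (s : ℕ) (A : ℕ → V) (B : ℕ → Finset V) (x bb : V) (p q : V) : Prop :=
  (p = A 0 ∧ (q = x ∨ ∃ j < s, q ∈ B j)) ∨
  (∃ i, 1 ≤ i ∧ i ≤ s - 1 ∧ p = A i ∧ (q = x ∨ ∃ j < s, j ≠ i ∧ q ∈ B j)) ∨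
  (p = A s ∧ ∃ j, 1 ≤ j ∧ j ≤ s - 1 ∧ q ∈ B j) ∨
  (p = x ∧ q ≠ bb ∧ q ≠ x ∧ q ≠ A s) ∨
  ((∃ j, 1 ≤ j ∧ j ≤ s - 1 ∧ p ∈ B j) ∧ (∃ k, 1 ≤ k ∧ k ≤ s - 1 ∧ q ∈ B k)) ∨
  (p ∈ B 0 ∧ q ∈ B 0)

/-- `G` is the graph in the family `𝒢₁(b₀, …, b_{s-1})` built from the given data. -/
def SimpleGraph.G1Witness {V : Type*} (G : SimpleGraph V)
    (s : ℕ) (A : ℕ → V) (B : ℕ → Finset V) (x bb : V) : Prop :=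
  2 ≤ s ∧
  (∀ i ≤ s, ∀ j ≤ s, A i = A j → i = j) ∧
  (∀ j < s, (B j).Nonempty) ∧
  (∀ i < s, ∀ j < s, i ≠ j → Disjoint (B i) (B j)) ∧
  (∀ i ≤ s, ∀ j < s, A i ∉ B j) ∧
  (∀ j < s, x ∉ B j) ∧ (∀ i ≤ s, x ≠ A i) ∧
  bb ∈ B 0 ∧
  (∀ z : V, (∃ i ≤ s, z = A i) ∨ (∃ j < s, z ∈ B j) ∨ z = x) ∧
  ∀ p q : V, G.Adj p q ↔ p ≠ q ∧ (G1Half s A B x bb p q ∨ G1Half s A B x bb q p)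

theorem stmt_19 {V : Type*} [Fintype V] [Nonempty V] [DecidableEq V]
    (G : SimpleGraph V) [DecidableRel G.Adj]
    (s : ℕ) (A : ℕ → V) (B : ℕ → Finset V) (x bb : V)
    (h : G.G1Witness s A B x bb)
    (hs : 4 ≤ s) (hb : ∀ j < s, (B j).card = 1) :
    G.conn = G.minDegree ∧ 3 ≤ G.conn ∧ ¬G.HamiltonianConnected ∧
      G.IsVertexCut (insert x ((Finset.range s).biUnion B)) ∧
      (insert x ((Finset.range s).biUnion B)).card = s + 1 ∧
      Nat.card ((G.induce
          ((↑(insert x ((Finset.range s).biUnion B)) : Set V)ᶜ)).ConnectedComponent)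
        = (insert x ((Finset.range s).biUnion B)).card := by
  obtain ⟨hs2, hAinj, hBne, hBdisj, hAB, hxB, hxA, hbbB, hclass, hadj⟩ := h
  have hBBne : ∀ {j k : ℕ} {v w : V}, j < s → k < s → j ≠ k → v ∈ B j → w ∈ B k → v ≠ w := by
    intro j k v w hj hk hjk hv hw e
    exact (Finset.disjoint_left.1 (hBdisj j hj k hk hjk)) hv (e ▸ hw)
  have hBx : ∀ {j : ℕ} {v : V}, j < s → v ∈ B j → v ≠ x := fun hj hv e => hxB _ hj (e ▸ hv)
  have hBA : ∀ {j i : ℕ} {v : V}, j < s → i ≤ s → v ∈ B j → v ≠ A i :=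
    fun hj hi hv e => hAB _ hi _ hj (e ▸ hv)
  have adjA0B : ∀ j < s, ∀ v ∈ B j, G.Adj (A 0) v := by
    intro j hj v hv
    exact (hadj _ _).2 ⟨(hBA hj (by omega) hv).symm,
      Or.inl (Or.inl ⟨rfl, Or.inr ⟨j, hj, hv⟩⟩)⟩
  have adjAiB : ∀ i, 1 ≤ i → i ≤ s - 1 → ∀ j < s, j ≠ i → ∀ v ∈ B j, G.Adj (A i) v := by
    intro i h1 h2 j hj hji v hv
    exact (hadj _ _).2 ⟨(hBA hj (by omega) hv).symm,
      Or.inl (Or.inr (Or.inl ⟨i, h1, h2, rfl, Or.inr ⟨j, hj, hji, hv⟩⟩))⟩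
  have adjAsB : ∀ j, 1 ≤ j → j ≤ s - 1 → ∀ v ∈ B j, G.Adj (A s) v := by
    intro j h1 h2 v hv
    exact (hadj _ _).2 ⟨(hBA (by omega) (le_refl s) hv).symm,
      Or.inl (Or.inr (Or.inr (Or.inl ⟨rfl, j, h1, h2, hv⟩)))⟩
  have adjA0x : G.Adj (A 0) x :=
    (hadj _ _).2 ⟨fun e => hxA 0 (by omega) e.symm, Or.inl (Or.inl ⟨rfl, Or.inl rfl⟩)⟩
  have adjAix : ∀ i, 1 ≤ i → i ≤ s - 1 → G.Adj (A i) x := fun i h1 h2 =>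
    (hadj _ _).2 ⟨fun e => hxA i (by omega) e.symm,
      Or.inl (Or.inr (Or.inl ⟨i, h1, h2, rfl, Or.inl rfl⟩))⟩
  have adjxB : ∀ j, 1 ≤ j → j ≤ s - 1 → ∀ v ∈ B j, G.Adj x v := by
    intro j h1 h2 v hv
    refine (hadj _ _).2 ⟨(hBx (by omega) hv).symm,
      Or.inl (Or.inr (Or.inr (Or.inr (Or.inl ⟨rfl, ?_, hBx (by omega) hv,
        hBA (by omega) (le_refl s) hv⟩))))⟩
    exact hBBne (by omega) (by omega) (by omega) hv hbbB
  have adjBB : ∀ j, 1 ≤ j → j ≤ s - 1 → ∀ k, 1 ≤ k → k ≤ s - 1 → j ≠ k →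
      ∀ v ∈ B j, ∀ w ∈ B k, G.Adj v w := by
    intro j hj1 hj2 k hk1 hk2 hjk v hv w hw
    exact (hadj _ _).2 ⟨hBBne (by omega) (by omega) hjk hv hw,
      Or.inl (Or.inr (Or.inr (Or.inr (Or.inr (Or.inl ⟨⟨j, hj1, hj2, hv⟩, ⟨k, hk1, hk2, hw⟩⟩)))))⟩
  have halfAA : ∀ i ≤ s, ∀ k ≤ s, ¬ G1Half s A B x bb (A i) (A k) := by
    intro i hi k hk hH
    rcases hH with ⟨_, hq⟩ | ⟨i', _, hi', _, hq⟩ | ⟨_, j, _, hj, hq⟩ | ⟨hp, _⟩ |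
      ⟨⟨j, _, hj, hp⟩, _⟩ | ⟨hp, _⟩
    · rcases hq with hq | ⟨j, hj, hq⟩
      · exact hxA k hk hq.symm
      · exact hAB k hk j hj hq
    · rcases hq with hq | ⟨j, hj, _, hq⟩
      · exact hxA k hk hq.symm
      · exact hAB k hk j hj hq
    · exact hAB k hk j (by omega) hq
    · exact hxA i hi hp.symm
    · exact hAB i hi j (by omega) hp
    · exact hAB i hi 0 (by omega) hp
  have nadjAA : ∀ i ≤ s, ∀ k ≤ s, ¬ G.Adj (A i) (A k) := by
    intro i hi k hk hA
    rcases (hadj _ _).1 hA with ⟨_, hH | hH⟩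
    exacts [halfAA i hi k hk hH, halfAA k hk i hi hH]
  have adjAs : ∀ v : V, G.Adj (A s) v → ∃ j, 1 ≤ j ∧ j ≤ s - 1 ∧ v ∈ B j := by
    intro v hA
    rcases (hadj _ _).1 hA with ⟨hne, hH | hH⟩
    · rcases hH with ⟨hp, _⟩ | ⟨i, hi1, hi2, hp, _⟩ | ⟨_, hq⟩ | ⟨hp, _⟩ |
        ⟨⟨j, _, hj, hp⟩, _⟩ | ⟨hp, _⟩
      · exact absurd (hAinj s (le_refl s) 0 (by omega) hp) (by omega)
      · exact absurd (hAinj s (le_refl s) i (by omega) hp) (by omega)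
      · exact hq
      · exact absurd hp.symm (hxA s (le_refl s))
      · exact absurd hp (hAB s (le_refl s) j (by omega))
      · exact absurd hp (hAB s (le_refl s) 0 (by omega))
    · rcases hH with ⟨_, hq⟩ | ⟨i, _, hi, _, hq⟩ | ⟨_, j, _, hj, hq⟩ | ⟨_, _, _, hq⟩ |
        ⟨_, k, _, hk, hq⟩ | ⟨_, hq⟩
      · rcases hq with hq | ⟨j, hj, hq⟩
        · exact absurd hq.symm (hxA s (le_refl s))
        · exact absurd hq (hAB s (le_refl s) j hj)
      · rcases hq with hq | ⟨j, hj, _, hq⟩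
        · exact absurd hq.symm (hxA s (le_refl s))
        · exact absurd hq (hAB s (le_refl s) j hj)
      · exact absurd hq (hAB s (le_refl s) j (by omega))
      · exact absurd rfl hq
      · exact absurd hq (hAB s (le_refl s) k (by omega))
      · exact absurd hq (hAB s (le_refl s) 0 (by omega))
  have cardBiU : ∀ I : Finset ℕ, (∀ j ∈ I, j < s) → (I.biUnion B).card = I.card := by
    intro I hI
    rw [Finset.card_biUnion fun i hi j hj hij => hBdisj i (hI i hi) j (hI j hj) hij]
    rw [Finset.sum_congr rfl fun j hj => hb j (hI j hj), Finset.sum_const, smul_eq_mul, mul_one]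
  have cardImg : ∀ I : Finset ℕ, (∀ j ∈ I, j ≤ s) → (I.image A).card = I.card := by
    intro I hI
    exact Finset.card_image_of_injOn fun i hi j hj e =>
      hAinj i (hI i (Finset.mem_coe.1 hi)) j (hI j (Finset.mem_coe.1 hj)) e
  have hIcc : ∀ j ∈ Icc 1 (s-1), j < s := by intro j hj; rw [Finset.mem_Icc] at hj; omega
  have hUcard : ((Icc 1 (s-1)).biUnion B).card = s - 1 := by
    rw [cardBiU _ hIcc, Nat.card_Icc]; omega
  have hcut0 : G.IsVertexCut ((Icc 1 (s-1)).biUnion B) := by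
    have hAsW : A s ∈ (↑((Icc 1 (s-1)).biUnion B) : Set V)ᶜ := by
      simp only [Set.mem_compl_iff, Finset.mem_coe, Finset.mem_biUnion, not_exists]
      intro j hj
      exact hAB s (le_refl s) j (hIcc j hj.1) hj.2
    have hA0W : A 0 ∈ (↑((Icc 1 (s-1)).biUnion B) : Set V)ᶜ := by
      simp only [Set.mem_compl_iff, Finset.mem_coe, Finset.mem_biUnion, not_exists]
      intro j hj
      exact hAB 0 (by omega) j (hIcc j hj.1) hj.2
    refine isolated_not_connected' (u := ⟨A s, hAsW⟩) (v := ⟨A 0, hA0W⟩) ?_ ?_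
    · intro e
      rw [Subtype.mk_eq_mk] at e
      exact absurd (hAinj s (le_refl s) 0 (by omega) e) (by omega)
    · rintro ⟨w, hw⟩ haw
      have haw' : G.Adj (A s) w := by simpa using haw
      obtain ⟨j, hj1, hj2, hwB⟩ := adjAs w haw'
      exact hw (Finset.mem_coe.2 (Finset.mem_biUnion.2 ⟨j, Finset.mem_Icc.2 ⟨hj1, hj2⟩, hwB⟩))
  have key : ∀ T : Finset V, T.card < s - 1 → ¬ G.IsVertexCut T := by
    intro T hT hcut
    apply hcut
    obtain ⟨hub, hhubU, hhubT⟩ : ∃ v ∈ (Icc 1 (s-1)).biUnion B, v ∉ T := by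
      by_contra hcon
      push_neg at hcon
      have := Finset.card_le_card fun v hv => hcon v hv
      omega
    obtain ⟨j, hjI, hhubB⟩ := Finset.mem_biUnion.1 hhubU
    rw [Finset.mem_Icc] at hjI
    have hjs : j < s := by omega
    have hubW : hub ∈ (↑T : Set V)ᶜ := hhubT
    have step1 : ∀ (z : V) (hz : z ∈ (↑T : Set V)ᶜ), G.Adj z hub →
        (G.induce (↑T : Set V)ᶜ).Reachable ⟨z, hz⟩ ⟨hub, hubW⟩ := by
      intro z hz ha
      exact Adj.reachable (by simpa using ha)
    have step2 : ∀ (z w : V) (hz : z ∈ (↑T : Set V)ᶜ), w ∉ T → G.Adj z w → G.Adj w hub →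
        (G.induce (↑T : Set V)ᶜ).Reachable ⟨z, hz⟩ ⟨hub, hubW⟩ := by
      intro z w hz hw ha1 ha2
      have hwW : w ∈ (↑T : Set V)ᶜ := hw
      exact Reachable.trans
        (Adj.reachable (u := (⟨z, hz⟩ : ((↑T : Set V)ᶜ : Set V))) (v := ⟨w, hwW⟩)
          (by simpa using ha1))
        (step1 w hwW ha2)
    have reach : ∀ z : ((↑T : Set V)ᶜ : Set V),
        (G.induce (↑T : Set V)ᶜ).Reachable z ⟨hub, hubW⟩ := by
      rintro ⟨z, hz⟩
      rcases hclass z with ⟨i, hi, rfl⟩ | ⟨k, hk, hzB⟩ | rfl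
      · by_cases hi0 : i = 0
        · subst hi0; exact step1 _ hz (adjA0B j hjs hub hhubB)
        · by_cases his : i = s
          · subst his; exact step1 _ hz (adjAsB j hjI.1 hjI.2 hub hhubB)
          · by_cases hij : j = i
            · subst hij
              obtain ⟨w, hwC, hwT⟩ :
                  ∃ w ∈ insert x (((Icc 1 (s-1)).erase j).biUnion B), w ∉ T := by
                by_contra hcon
                push_neg at hcon
                have hsub := Finset.card_le_card fun v hv => hcon v hv
                have hxn : x ∉ ((Icc 1 (s-1)).erase j).biUnion B := by
                  simp only [Finset.mem_biUnion, not_exists]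
                  intro k hk
                  exact hxB k (hIcc k (Finset.mem_of_mem_erase hk.1)) hk.2
                rw [Finset.card_insert_of_notMem hxn,
                  cardBiU _ (fun k hk => hIcc k (Finset.mem_of_mem_erase hk)),
                  Finset.card_erase_of_mem (Finset.mem_Icc.2 hjI), Nat.card_Icc] at hsub
                omega
              rcases Finset.mem_insert.1 hwC with rfl | hwB
              · exact step2 _ _ hz hwT (adjAix j hjI.1 hjI.2) (adjxB j hjI.1 hjI.2 hub hhubB)
              · obtain ⟨k, hkI, hwB'⟩ := Finset.mem_biUnion.1 hwB
                have hkj : k ≠ j := Finset.ne_of_mem_erase hkI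
                have hkI' := Finset.mem_Icc.1 (Finset.mem_of_mem_erase hkI)
                exact step2 _ _ hz hwT
                  (adjAiB j hjI.1 hjI.2 k (by omega) hkj w hwB')
                  (adjBB k hkI'.1 hkI'.2 j hjI.1 hjI.2 hkj w hwB' hub hhubB)
            · exact step1 _ hz (adjAiB i (by omega) (by omega) j hjs hij hub hhubB)
      · by_cases hk0 : k = 0
        · subst hk0
          obtain ⟨w, hwC, hwT⟩ : ∃ w ∈ ((range s).erase j).image A, w ∉ T := by
            by_contra hcon
            push_neg at hcon
            have hsub := Finset.card_le_card fun v hv => hcon v hv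
            rw [cardImg _ (fun m hm => by
                have := Finset.mem_range.1 (Finset.mem_of_mem_erase hm); omega),
              Finset.card_erase_of_mem (Finset.mem_range.2 hjs), Finset.card_range] at hsub
            omega
          obtain ⟨m, hmI, rfl⟩ := Finset.mem_image.1 hwC
          have hmj : m ≠ j := Finset.ne_of_mem_erase hmI
          have hms : m < s := Finset.mem_range.1 (Finset.mem_of_mem_erase hmI)
          by_cases hm0 : m = 0
          · subst hm0
            exact step2 _ _ hz hwT (adjA0B 0 (by omega) z hzB).symm (adjA0B j hjs hub hhubB)
          · exact step2 _ _ hz hwT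
              (adjAiB m (by omega) (by omega) 0 (by omega) (by omega) z hzB).symm
              (adjAiB m (by omega) (by omega) j hjs (Ne.symm hmj) hub hhubB)
        · by_cases hkj : k = j
          · subst hkj
            have hzhub : z = hub :=
              Finset.card_le_one.1 (le_of_eq (hb k (by omega))) z hzB hub hhubB
            subst hzhub
            exact Reachable.refl _
          · exact step1 _ hz
              (adjBB k (by omega) (by omega) j hjI.1 hjI.2 hkj z hzB hub hhubB)
      · exact step1 _ hz (adjxB j hjI.1 hjI.2 hub hhubB)
    rw [connected_iff]
    exact ⟨fun u v => (reach u).trans (reach v).symm, ⟨⟨hub, hubW⟩⟩⟩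
  have hconn : G.conn = s - 1 := by
    have hmem : (s - 1) ∈ {n | ∃ S' : Finset V, S'.card = n ∧ G.IsVertexCut S'} :=
      ⟨(Icc 1 (s-1)).biUnion B, hUcard, hcut0⟩
    refine le_antisymm (Nat.sInf_le hmem) (le_csInf ⟨_, hmem⟩ ?_)
    rintro n ⟨T, rfl, hcut⟩
    by_contra hn
    push_neg at hn
    exact key T (by omega) hcut
  have hNAs : G.neighborFinset (A s) = (Icc 1 (s-1)).biUnion B := by
    ext v
    rw [SimpleGraph.mem_neighborFinset]
    constructor
    · intro hA
      obtain ⟨j, h1, h2, hv⟩ := adjAs v hA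
      exact Finset.mem_biUnion.2 ⟨j, Finset.mem_Icc.2 ⟨h1, h2⟩, hv⟩
    · intro hv
      obtain ⟨j, hjI, hv⟩ := Finset.mem_biUnion.1 hv
      rw [Finset.mem_Icc] at hjI
      exact adjAsB j hjI.1 hjI.2 v hv
  have hdegAs : G.degree (A s) = s - 1 := by
    show (G.neighborFinset (A s)).card = s - 1
    rw [hNAs, hUcard]
  have haux : ∀ (v : V) (T' : Finset V), (∀ w ∈ T', G.Adj v w) → T'.card ≤ G.degree v := by
    intro v T' hT'
    exact Finset.card_le_card fun w hw => (SimpleGraph.mem_neighborFinset _ _ _).2 (hT' w hw)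
  have hdeg_lb : ∀ v : V, s - 1 ≤ G.degree v := by
    intro v
    rcases hclass v with ⟨i, hi, rfl⟩ | ⟨k, hk, hvB⟩ | rfl
    · by_cases hi0 : i = 0
      · subst hi0
        have h1 : ∀ w ∈ (range s).biUnion B, G.Adj (A 0) w := by
          intro w hw
          obtain ⟨j, hj, hw⟩ := Finset.mem_biUnion.1 hw
          exact adjA0B j (Finset.mem_range.1 hj) w hw
        have h2 := haux _ _ h1
        rw [cardBiU _ (fun j hj => Finset.mem_range.1 hj), Finset.card_range] at h2
        omega
      · by_cases his : i = s
        · subst his; exact hdegAs.ge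
        · have h1 : ∀ w ∈ ((range s).erase i).biUnion B, G.Adj (A i) w := by
            intro w hw
            obtain ⟨j, hj, hw⟩ := Finset.mem_biUnion.1 hw
            exact adjAiB i (by omega) (by omega) j
              (Finset.mem_range.1 (Finset.mem_of_mem_erase hj)) (Finset.ne_of_mem_erase hj) w hw
          have h2 := haux _ _ h1
          rw [cardBiU _ (fun j hj => Finset.mem_range.1 (Finset.mem_of_mem_erase hj)),
            Finset.card_erase_of_mem (Finset.mem_range.2 (by omega)), Finset.card_range] at h2
          omega
    · by_cases hk0 : k = 0
      · subst hk0
        have h1 : ∀ w ∈ (range s).image A, G.Adj v w := by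
          intro w hw
          obtain ⟨m, hm, rfl⟩ := Finset.mem_image.1 hw
          have hms := Finset.mem_range.1 hm
          by_cases hm0 : m = 0
          · subst hm0; exact (adjA0B 0 (by omega) v hvB).symm
          · exact (adjAiB m (by omega) (by omega) 0 (by omega) (by omega) v hvB).symm
        have h2 := haux _ _ h1
        rw [cardImg _ (fun m hm => by have := Finset.mem_range.1 hm; omega),
          Finset.card_range] at h2
        omega
      · have h1 : ∀ w ∈ ((range s).erase k).image A, G.Adj v w := by
          intro w hw
          obtain ⟨m, hm, rfl⟩ := Finset.mem_image.1 hw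
          have hms := Finset.mem_range.1 (Finset.mem_of_mem_erase hm)
          have hmk := Finset.ne_of_mem_erase hm
          by_cases hm0 : m = 0
          · subst hm0; exact (adjA0B k hk v hvB).symm
          · exact (adjAiB m (by omega) (by omega) k hk (Ne.symm hmk) v hvB).symm
        have h2 := haux _ _ h1
        rw [cardImg _ (fun m hm => by
            have := Finset.mem_range.1 (Finset.mem_of_mem_erase hm); omega),
          Finset.card_erase_of_mem (Finset.mem_range.2 hk), Finset.card_range] at h2
        omega
    · have h1 : ∀ w ∈ (range s).image A, G.Adj v w := by
        intro w hw
        obtain ⟨m, hm, rfl⟩ := Finset.mem_image.1 hw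
        have hms := Finset.mem_range.1 hm
        by_cases hm0 : m = 0
        · subst hm0; exact adjA0x.symm
        · exact (adjAix m (by omega) (by omega)).symm
      have h2 := haux _ _ h1
      rw [cardImg _ (fun m hm => by have := Finset.mem_range.1 hm; omega),
        Finset.card_range] at h2
      omega
  have hmind : G.minDegree = s - 1 :=
    le_antisymm (hdegAs ▸ G.minDegree_le_degree (A s))
      (G.le_minDegree_of_forall_le_degree _ hdeg_lb)
  have hcardV : Fintype.card V ≤ 2*s + 2 := by
    have hsub : (Finset.univ : Finset V) ⊆
        ((range (s+1)).image A) ∪ ((range s).biUnion B ∪ {x}) := by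
      intro z _
      rcases hclass z with ⟨i, hi, rfl⟩ | ⟨k, hk, hzB⟩ | rfl
      · exact Finset.mem_union.2 (Or.inl (Finset.mem_image.2 ⟨i, Finset.mem_range.2 (by omega), rfl⟩))
      · exact Finset.mem_union.2 (Or.inr (Finset.mem_union.2 (Or.inl
          (Finset.mem_biUnion.2 ⟨k, Finset.mem_range.2 hk, hzB⟩))))
      · exact Finset.mem_union.2 (Or.inr (Finset.mem_union.2 (Or.inr (Finset.mem_singleton_self _))))
    have h1 := Finset.card_le_card hsub
    have h2 := Finset.card_union_le ((range (s+1)).image A) ((range s).biUnion B ∪ {x})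
    have h3 := Finset.card_union_le ((range s).biUnion B) ({x} : Finset V)
    have h4 := Finset.card_image_le (f := A) (s := range (s+1))
    rw [Finset.card_range] at h4
    rw [cardBiU _ (fun j hj => Finset.mem_range.1 hj), Finset.card_range] at h3
    rw [Finset.card_univ] at h1
    simp only [Finset.card_singleton] at h3
    omega
  have hnotham : ¬G.HamiltonianConnected := by
    intro hham
    have hxbb : x ≠ bb := (hBx (show (0:ℕ) < s by omega) hbbB).symm
    obtain ⟨p, hp⟩ := hham x bb hxbb
    classical
    set P : V → Bool := fun z => decide (∃ i ∈ range (s+1), z = A i) with hP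
    have hPiff : ∀ z, P z = true ↔ ∃ i ≤ s, z = A i := by
      intro z
      rw [hP]
      simp only [decide_eq_true_eq, Finset.mem_range, Nat.lt_succ_iff]
    have hPA : ∀ i ≤ s, P (A i) = true := fun i hi => (hPiff _).2 ⟨i, hi, rfl⟩
    have hPx : P x = false := by
      rw [← Bool.not_eq_true, hPiff]
      rintro ⟨i, hi, e⟩
      exact hxA i hi e
    have hPbb : P bb = false := by
      rw [← Bool.not_eq_true, hPiff]
      rintro ⟨i, hi, e⟩
      exact hAB i hi 0 (by omega) (e ▸ hbbB)
    have hnodup : p.support.Nodup := hp.isPath.support_nodup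
    have hlen : p.support.length ≤ 2*s + 2 := by
      rw [← List.toFinset_card_of_nodup hnodup]
      exact le_trans (Finset.card_le_univ _) hcardV
    have hcount_lb : s + 1 ≤ p.support.countP P := by
      have hsub2 : (range (s+1)).image A ⊆ (p.support.filter P).toFinset := by
        intro z hz
        obtain ⟨i, hi, rfl⟩ := Finset.mem_image.1 hz
        rw [List.mem_toFinset, List.mem_filter]
        exact ⟨hp.mem_support _, hPA i (by have := Finset.mem_range.1 hi; omega)⟩
      have e1 : ((range (s+1)).image A).card = s + 1 := by
        rw [cardImg _ (fun m hm => by have := Finset.mem_range.1 hm; omega), Finset.card_range]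
      calc s + 1 = ((range (s+1)).image A).card := e1.symm
        _ ≤ (p.support.filter P).toFinset.card := Finset.card_le_card hsub2
        _ ≤ (p.support.filter P).length := List.toFinset_card_le _
        _ = p.support.countP P := List.countP_eq_length_filter.symm
    have hQ : ∀ u' v' : V, G.Adj u' v' → ¬(P u' = true ∧ P v' = true) := by
      rintro u' v' ha ⟨h1, h2⟩
      obtain ⟨i, hi, rfl⟩ := (hPiff _).1 h1
      obtain ⟨k, hk, rfl⟩ := (hPiff _).1 h2
      exact nadjAA i hi k hk ha
    have hchain : p.support.Chain' (fun a b => ¬(P a = true ∧ P b = true)) :=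
      List.IsChain.imp hQ p.isChain_adj_support
    have hxhead : p.support = x :: p.support.tail := p.support_eq_cons
    have hbbmem : bb ∈ p.support := p.end_mem_support
    have htne : p.support.tail ≠ [] := by
      intro e
      rw [hxhead, e] at hbbmem
      simp only [List.mem_singleton] at hbbmem
      exact hxbb hbbmem.symm
    have h1 := p.reverse.support_eq_cons
    rw [SimpleGraph.Walk.support_reverse] at h1
    have h2 : p.support = (p.support.reverse.tail).reverse ++ [bb] := by
      conv_lhs => rw [← List.reverse_reverse p.support, h1]
      simp
    obtain ⟨t, ht⟩ : ∃ t, p.support = x :: (t ++ [bb]) := by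
      rcases hm : (p.support.reverse.tail).reverse with _ | ⟨c, m'⟩
      · exfalso
        rw [hm] at h2
        rw [h2] at hxhead
        simp only [List.nil_append] at hxhead
        have hbx : bb = x := List.head_eq_of_cons_eq hxhead
        exact hxbb hbx.symm
      · rw [hm] at h2
        have h2' : p.support = c :: (m' ++ [bb]) := by rw [h2]; simp
        have hcx : c = x := by
          rw [h2'] at hxhead
          simp only [List.tail_cons] at hxhead
          exact (List.head_eq_of_cons_eq hxhead)
        exact ⟨m', by rw [h2', hcx]⟩
    have hcp : p.support.countP P = t.countP P := by
      rw [ht, List.countP_cons, List.countP_append, List.countP_cons, List.countP_nil]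
      simp [hPx, hPbb]
    have hchain2 : t.Chain' (fun a b => ¬(P a = true ∧ P b = true)) := by
      rw [ht] at hchain
      exact chain'_ends_drop P x bb t hchain
    have hbound := countP_chain'' P t hchain2
    have hlen2 : p.support.length = t.length + 2 := by rw [ht]; simp
    omega
  set S := insert x ((range s).biUnion B) with hS
  have hxnotbiU : x ∉ (range s).biUnion B := by
    intro hmem
    obtain ⟨j, hj, hm⟩ := Finset.mem_biUnion.1 hmem
    exact hxB j (Finset.mem_range.1 hj) hm
  have hScard : S.card = s + 1 := by
    rw [hS, Finset.card_insert_of_notMem hxnotbiU,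
      cardBiU _ (fun j hj => Finset.mem_range.1 hj), Finset.card_range]
  have hWdesc : (↑S : Set V)ᶜ = ↑((range (s+1)).image A) := by
    ext z
    simp only [Set.mem_compl_iff, Finset.mem_coe]
    constructor
    · intro hz
      rcases hclass z with ⟨i, hi, rfl⟩ | ⟨k, hk, hzB⟩ | rfl
      · exact Finset.mem_image.2 ⟨i, Finset.mem_range.2 (by omega), rfl⟩
      · exact absurd (Finset.mem_insert.2 (Or.inr
          (Finset.mem_biUnion.2 ⟨k, Finset.mem_range.2 hk, hzB⟩))) hz
      · exact absurd (Finset.mem_insert_self _ _) hz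
    · intro hz hmem
      obtain ⟨i, hi, rfl⟩ := Finset.mem_image.1 hz
      have hi' : i ≤ s := by have := Finset.mem_range.1 hi; omega
      rcases Finset.mem_insert.1 hmem with e | hm
      · exact hxA i hi' e.symm
      · obtain ⟨k, hk, hik⟩ := Finset.mem_biUnion.1 hm
        exact hAB i hi' k (Finset.mem_range.1 hk) hik
  have hEdg : ∀ a b : ((↑S : Set V)ᶜ : Set V), ¬(G.induce ((↑S : Set V)ᶜ)).Adj a b := by
    rintro ⟨a, ha⟩ ⟨b, hb⟩ hab
    have ha' : a ∈ (↑((range (s+1)).image A) : Set V) := hWdesc ▸ ha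
    have hb' : b ∈ (↑((range (s+1)).image A) : Set V) := hWdesc ▸ hb
    obtain ⟨i, hi, rfl⟩ := Finset.mem_image.1 (Finset.mem_coe.1 ha')
    obtain ⟨k, hk, rfl⟩ := Finset.mem_image.1 (Finset.mem_coe.1 hb')
    have hab' : G.Adj (A i) (A k) := by simpa using hab
    exact nadjAA i (by have := Finset.mem_range.1 hi; omega) k
      (by have := Finset.mem_range.1 hk; omega) hab'
  have hA0W : A 0 ∈ (↑S : Set V)ᶜ := by
    rw [hWdesc]
    exact Finset.mem_coe.2 (Finset.mem_image.2 ⟨0, Finset.mem_range.2 (by omega), rfl⟩)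
  have hA1W : A 1 ∈ (↑S : Set V)ᶜ := by
    rw [hWdesc]
    exact Finset.mem_coe.2 (Finset.mem_image.2 ⟨1, Finset.mem_range.2 (by omega), rfl⟩)
  have hVC : G.IsVertexCut S := by
    refine edgeless_not_connected' hEdg (u := ⟨A 0, hA0W⟩) (v := ⟨A 1, hA1W⟩) ?_
    intro e
    rw [Subtype.mk_eq_mk] at e
    exact absurd (hAinj 0 (by omega) 1 (by omega) e) (by omega)
  have hNcard : Nat.card ((G.induce ((↑S : Set V)ᶜ)).ConnectedComponent) = S.card := by
    rw [edgeless_card_components' _ hEdg, hWdesc]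
    rw [Nat.card_coe_set_eq, Set.ncard_coe_finset,
      cardImg _ (fun m hm => by have := Finset.mem_range.1 hm; omega), Finset.card_range, hScard]
  exact ⟨hconn.trans hmind.symm, by rw [hconn]; omega, hnotham, hVC, hScard, hNcard⟩
end
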